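/- arXiv:2201.00228 — 9 statements merged into one kernel-verified Lean document; each statement's English description precedes it below -/
import Mathlib

section
/- Let A ∈ ℝ^{n×d}, b ∈ ℝ^n, and set M = [A, b] ∈ ℝ^{n×(d+1)} (A with b appended as a last column). Let 0 ≤ ε < 1 and let D ∈ ℝ^{n'×n} be any matrix such that (1−ε)·MᵀM ⪯ Mᵀ Dᵀ D M ⪯ (1+ε)·MᵀM. If x ∈ ℝ^d minimizes x' ↦ ‖D A x' − D b‖₂ over ℝ^d, then ‖A x − b‖₂² ≤ ((1+ε)/(1−ε)) · min_{x' ∈ ℝ^d} ‖A x' − b‖₂². -/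
open Matrix

/-- Lemma 3.3: approximate least-squares regression from spectral
approximation. If `M = [A, b]` and `D` satisfies `(1−ε)MᵀM ⪯ MᵀDᵀDM ⪯ (1+ε)MᵀM`, then an
exact minimizer `x` of `x' ↦ ‖DAx' − Db‖₂` satisfies
`‖Ax − b‖₂² ≤ ((1+ε)/(1−ε)) · min_{x'} ‖Ax' − b‖₂²`. -/
theorem approx_lsr_from_spectral_approx {n n' d : ℕ}
    (A : Matrix (Fin n) (Fin d) ℝ) (b : Fin n → ℝ)
    (ε : ℝ) (hε0 : 0 ≤ ε) (hε1 : ε < 1)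
    (M : Matrix (Fin n) (Fin (d + 1)) ℝ)
    (hM : M = Matrix.of fun i => Fin.snoc (A i) (b i))
    (D : Matrix (Fin n') (Fin n) ℝ)
    (hlow : (Mᵀ * Dᵀ * D * M - (1 - ε) • (Mᵀ * M)).PosSemidef)
    (hhigh : ((1 + ε) • (Mᵀ * M) - Mᵀ * Dᵀ * D * M).PosSemidef)
    (x : Fin d → ℝ)
    (hx : ∀ x' : Fin d → ℝ,
      Real.sqrt (((D * A) *ᵥ x - D *ᵥ b) ⬝ᵥ ((D * A) *ᵥ x - D *ᵥ b)) ≤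
        Real.sqrt (((D * A) *ᵥ x' - D *ᵥ b) ⬝ᵥ ((D * A) *ᵥ x' - D *ᵥ b))) :
    ∀ x' : Fin d → ℝ,
      (A *ᵥ x - b) ⬝ᵥ (A *ᵥ x - b) ≤
        ((1 + ε) / (1 - ε)) * ((A *ᵥ x' - b) ⬝ᵥ (A *ᵥ x' - b)) := by
  intro x'
  have hpos : (0:ℝ) < 1 - ε := by linarith
  -- M applied to (snoc y (-1)) gives A y - b
  have hMv : ∀ y : Fin d → ℝ, M *ᵥ (Fin.snoc y (-1)) = A *ᵥ y - b := by
    intro y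
    funext i
    simp [hM, Matrix.mulVec, dotProduct, Fin.sum_univ_castSucc]
    ring
  -- quadratic form identity
  have hquad : ∀ (m : ℕ) (N : Matrix (Fin m) (Fin (d+1)) ℝ) (v : Fin (d+1) → ℝ),
      v ⬝ᵥ ((Nᵀ * N) *ᵥ v) = (N *ᵥ v) ⬝ᵥ (N *ᵥ v) := by
    intro m N v
    rw [← Matrix.mulVec_mulVec, Matrix.dotProduct_mulVec, Matrix.vecMul_transpose]
  have key : ∀ v : Fin (d+1) → ℝ,
      (1 - ε) * ((M *ᵥ v) ⬝ᵥ (M *ᵥ v)) ≤ (D *ᵥ (M *ᵥ v)) ⬝ᵥ (D *ᵥ (M *ᵥ v)) ∧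
      (D *ᵥ (M *ᵥ v)) ⬝ᵥ (D *ᵥ (M *ᵥ v)) ≤ (1 + ε) * ((M *ᵥ v) ⬝ᵥ (M *ᵥ v)) := by
    intro v
    have h1 := hlow.dotProduct_mulVec_nonneg v
    have h2 := hhigh.dotProduct_mulVec_nonneg v
    have hrw : Mᵀ * Dᵀ * D * M = (D * M)ᵀ * (D * M) := by
      rw [Matrix.transpose_mul, Matrix.mul_assoc]
    have hDM : v ⬝ᵥ ((Mᵀ * Dᵀ * D * M) *ᵥ v) = (D *ᵥ (M *ᵥ v)) ⬝ᵥ (D *ᵥ (M *ᵥ v)) := by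
      rw [hrw, hquad n', Matrix.mulVec_mulVec]
    have hMM : v ⬝ᵥ ((Mᵀ * M) *ᵥ v) = (M *ᵥ v) ⬝ᵥ (M *ᵥ v) := hquad n M v
    simp only [Matrix.sub_mulVec, Matrix.smul_mulVec, dotProduct_sub,
      dotProduct_smul, smul_eq_mul, star_trivial, hDM, hMM] at h1 h2
    constructor <;> linarith
  set s := (A *ᵥ x - b) ⬝ᵥ (A *ᵥ x - b) with hs
  set t := (A *ᵥ x' - b) ⬝ᵥ (A *ᵥ x' - b) with ht
  have k1 := key (Fin.snoc x (-1))
  have k2 := key (Fin.snoc x' (-1))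
  rw [hMv x] at k1
  rw [hMv x'] at k2
  have hDrw : ∀ y : Fin d → ℝ, (D * A) *ᵥ y - D *ᵥ b = D *ᵥ (A *ᵥ y - b) := by
    intro y; rw [Matrix.mulVec_sub, Matrix.mulVec_mulVec]
  have hle : (D *ᵥ (A *ᵥ x - b)) ⬝ᵥ (D *ᵥ (A *ᵥ x - b)) ≤
      (D *ᵥ (A *ᵥ x' - b)) ⬝ᵥ (D *ᵥ (A *ᵥ x' - b)) := by
    have h := hx x'
    rw [hDrw x, hDrw x'] at h
    have h1 : (0:ℝ) ≤ (D *ᵥ (A *ᵥ x - b)) ⬝ᵥ (D *ᵥ (A *ᵥ x - b)) :=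
      Finset.sum_nonneg fun i _ => mul_self_nonneg _
    have h2 : (0:ℝ) ≤ (D *ᵥ (A *ᵥ x' - b)) ⬝ᵥ (D *ᵥ (A *ᵥ x' - b)) :=
      Finset.sum_nonneg fun i _ => mul_self_nonneg _
    calc (D *ᵥ (A *ᵥ x - b)) ⬝ᵥ (D *ᵥ (A *ᵥ x - b))
        = Real.sqrt ((D *ᵥ (A *ᵥ x - b)) ⬝ᵥ (D *ᵥ (A *ᵥ x - b))) ^ 2 := by
          rw [Real.sq_sqrt h1]
      _ ≤ Real.sqrt ((D *ᵥ (A *ᵥ x' - b)) ⬝ᵥ (D *ᵥ (A *ᵥ x' - b))) ^ 2 := by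
          apply pow_le_pow_left₀ (Real.sqrt_nonneg _) h
      _ = _ := Real.sq_sqrt h2
  have hchain : (1 - ε) * s ≤ (1 + ε) * t := by
    calc (1 - ε) * s ≤ _ := k1.1
      _ ≤ _ := hle
      _ ≤ (1 + ε) * t := k2.2
  rw [div_mul_eq_mul_div, le_div_iff₀ hpos]
  linarith
end

section
/- Let d ≥ 1, B ∈ {0,1}^{d×d}, and z ∈ {0,1}^d with z ≠ 0. Let H = [[2·I_d, (1/d)·B], [(1/d)·Bᵀ, 2·I_d]] ∈ ℝ^{2d×2d} and z̄ = (0_d, z/‖z‖₂) ∈ ℝ^{2d}. Suppose ŷ = (y', y'') ∈ ℝ^{2d} satisfies ‖ŷ − H z̄‖₂ ≤ 1/(4d²). Define y ∈ {0,1}^d by y_i = 1 if d‖z‖₂ · y'_i ≥ 1/2 and y_i = 0 otherwise. Then for every i ∈ [d], y_i = 1 if and only if Σ_j B_{ij} z_j ≥ 1; that is, y equals the Boolean (OR–AND) matrix-vector product of B and z. -/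
open Matrix

/-- exact-recovery step in the proof of Lemma 4.1. Given a Boolean matrix
`B` and a nonzero Boolean vector `z`, set `H = [[2I, B/d], [Bᵀ/d, 2I]]` and
`z̄ = (0, z/‖z‖₂)`. If `ŷ` satisfies `‖ŷ − Hz̄‖₂ ≤ 1/(4d²)` and `y` is obtained by
thresholding `d‖z‖₂ · ŷ'` at `1/2` (where `ŷ'` is the first block of `ŷ`), then `y` equals
the Boolean (OR–AND) matrix-vector product of `B` and `z`:
for every `i`, `y i = 1 ↔ Σ_j B i j * z j ≥ 1`. -/
theorem omv_exact_recovery {d : ℕ} (hd : 1 ≤ d)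
    (B : Matrix (Fin d) (Fin d) ℝ) (hB : ∀ i j, B i j = 0 ∨ B i j = 1)
    (z : Fin d → ℝ) (hz : ∀ i, z i = 0 ∨ z i = 1) (hz0 : z ≠ 0)
    (H : Matrix (Fin d ⊕ Fin d) (Fin d ⊕ Fin d) ℝ)
    (hH : H = Matrix.fromBlocks
      ((2 : ℝ) • (1 : Matrix (Fin d) (Fin d) ℝ)) ((1 / (d : ℝ)) • B)
      ((1 / (d : ℝ)) • Bᵀ) ((2 : ℝ) • (1 : Matrix (Fin d) (Fin d) ℝ)))
    (zbar : Fin d ⊕ Fin d → ℝ)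
    (hzbar : zbar = Sum.elim (0 : Fin d → ℝ) (fun i => z i / Real.sqrt (z ⬝ᵥ z)))
    (yhat : Fin d ⊕ Fin d → ℝ)
    (hyhat : Real.sqrt ((yhat - H *ᵥ zbar) ⬝ᵥ (yhat - H *ᵥ zbar)) ≤ 1 / (4 * (d : ℝ) ^ 2))
    (y : Fin d → ℝ)
    (hy1 : ∀ i, (1 : ℝ) / 2 ≤ (d : ℝ) * Real.sqrt (z ⬝ᵥ z) * yhat (Sum.inl i) → y i = 1)
    (hy0 : ∀ i, (d : ℝ) * Real.sqrt (z ⬝ᵥ z) * yhat (Sum.inl i) < (1 : ℝ) / 2 → y i = 0) :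
    ∀ i, y i = 1 ↔ 1 ≤ ∑ j, B i j * z j := by
  intro i
  have hd1 : (1:ℝ) ≤ (d:ℝ) := by exact_mod_cast hd
  have hn_eq : z ⬝ᵥ z = ∑ j, z j := by
    simp only [dotProduct]
    refine Finset.sum_congr rfl fun j _ => ?_
    rcases hz j with h | h <;> simp [h]
  have hn1 : (1:ℝ) ≤ z ⬝ᵥ z := by
    obtain ⟨j, hj⟩ : ∃ j, z j = 1 := by
      by_contra h
      push_neg at h
      apply hz0; funext j
      rcases hz j with h' | h'
      · exact h'
      · exact absurd h' (h j)
    rw [hn_eq]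
    calc (1:ℝ) = z j := hj.symm
    _ ≤ ∑ j, z j := Finset.single_le_sum
        (fun k _ => by rcases hz k with h | h <;> simp [h]) (Finset.mem_univ j)
  have hnd : z ⬝ᵥ z ≤ (d:ℝ) := by
    rw [hn_eq]
    calc ∑ j, z j ≤ ∑ _j : Fin d, (1:ℝ) :=
          Finset.sum_le_sum (fun k _ => by rcases hz k with h | h <;> simp [h])
    _ = d := by simp
  have hs_pos : 0 < Real.sqrt (z ⬝ᵥ z) := Real.sqrt_pos.2 (by linarith)
  have hsd : Real.sqrt (z ⬝ᵥ z) ≤ (d:ℝ) := by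
    have : Real.sqrt (z ⬝ᵥ z) ≤ Real.sqrt ((d:ℝ)^2) :=
      Real.sqrt_le_sqrt (by nlinarith)
    rwa [Real.sqrt_sq (by positivity)] at this
  have hv : (H *ᵥ zbar) (Sum.inl i)
      = (∑ j, B i j * z j) / ((d:ℝ) * Real.sqrt (z ⬝ᵥ z)) := by
    subst hH; subst hzbar
    rw [Matrix.fromBlocks_mulVec]
    simp [Matrix.mulVec, dotProduct, Finset.sum_div]
    refine Finset.sum_congr rfl fun j _ => ?_
    rw [div_mul_eq_div_div_swap]
    ring
  set w := yhat - H *ᵥ zbar with hw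
  have herr : |w (Sum.inl i)| ≤ 1 / (4 * (d:ℝ)^2) := by
    have h1 : (w (Sum.inl i))^2 ≤ w ⬝ᵥ w := by
      rw [dotProduct]
      have h := Finset.single_le_sum (f := fun k => w k * w k)
        (fun k _ => mul_self_nonneg _) (Finset.mem_univ (Sum.inl i))
      nlinarith [h]
    calc |w (Sum.inl i)| = Real.sqrt ((w (Sum.inl i))^2) := (Real.sqrt_sq_eq_abs _).symm
    _ ≤ Real.sqrt (w ⬝ᵥ w) := Real.sqrt_le_sqrt h1
    _ ≤ _ := hyhat
  have key : (d:ℝ) * Real.sqrt (z ⬝ᵥ z) * yhat (Sum.inl i)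
      = (d:ℝ) * Real.sqrt (z ⬝ᵥ z) * w (Sum.inl i) + ∑ j, B i j * z j := by
    have hy : yhat (Sum.inl i) = w (Sum.inl i) + (H *ᵥ zbar) (Sum.inl i) := by
      simp [hw]
    rw [hy, hv]
    field_simp
  have hbd : |(d:ℝ) * Real.sqrt (z ⬝ᵥ z) * w (Sum.inl i)| ≤ 1/4 := by
    rw [abs_mul, abs_of_nonneg (by positivity : (0:ℝ) ≤ (d:ℝ) * Real.sqrt (z ⬝ᵥ z))]
    have h2 : (d:ℝ) * Real.sqrt (z ⬝ᵥ z) ≤ (d:ℝ) * (d:ℝ) := by nlinarith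
    calc (d:ℝ) * Real.sqrt (z ⬝ᵥ z) * |w (Sum.inl i)|
        ≤ (d:ℝ) * (d:ℝ) * (1 / (4 * (d:ℝ)^2)) := by
          apply mul_le_mul h2 herr (abs_nonneg _) (by nlinarith)
    _ = 1/4 := by field_simp
  have habs := abs_le.1 hbd
  have hScases : (∑ j, B i j * z j) = 0 ∨ 1 ≤ ∑ j, B i j * z j := by
    by_cases h : ∀ j, B i j * z j = 0
    · left; exact Finset.sum_eq_zero fun j _ => h j
    · right
      push_neg at h; obtain ⟨j, hj⟩ := h
      have hj1 : B i j * z j = 1 := by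
        rcases hB i j with h1 | h1 <;> rcases hz j with h2 | h2 <;>
          simp [h1, h2] at hj ⊢
      calc (1:ℝ) = B i j * z j := hj1.symm
      _ ≤ _ := Finset.single_le_sum (f := fun k => B i k * z k)
          (fun k _ => by rcases hB i k with h1 | h1 <;> rcases hz k with h2 | h2 <;>
            simp [h1, h2]) (Finset.mem_univ j)
  rcases hScases with hS | hS
  · constructor
    · intro hyi
      exfalso
      have h0 : y i = 0 := hy0 i (by rw [key, hS]; linarith)
      rw [h0] at hyi; norm_num at hyi
    · intro h; linarith
  · constructor
    · intro _; exact hS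
    · intro _
      apply hy1
      rw [key]
      linarith
end

section
/- Let d₁ ∈ {0,…,d} and let U ∈ ℝ^{d×d₁} have orthonormal columns (UᵀU = I). For v ∈ ℝ^d write v_U = UUᵀv and v_{U⊥} = v − UUᵀv. Let α = 1/3, β ≥ 0, and K ≥ 1 with 4K²β ≤ 1. Let z_r ∈ ℝ^d with ‖z_r‖₂ ≤ 2, and suppose vectors w_0, w_1, …, w_K and y_1, …, y_K in ℝ^d satisfy: ‖w_0 − (z_r)_{U⊥}‖₂ ≤ α‖(z_r)_{U⊥}‖₂ + β‖z_r‖₂; and for each k ∈ [K], ‖y_k − (w_{k−1})_U‖₂ ≤ α‖(w_{k−1})_U‖₂ + β‖w_{k−1}‖₂ and w_k = w_{k−1} − y_k. Define δ_0 = (z_r)_{U⊥} − w_0 and δ_k = y_k + (δ_{k−1})_U for k ∈ [K]. Then for every k ∈ [K]: (i) w_k = (z_r)_{U⊥} − Σ_{τ=0}^{k−1} (δ_τ)_{U⊥} − δ_k; (ii) ‖δ_k‖₂ ≤ α‖(δ_{k−1})_U‖₂ + 4β; and (iii) ‖δ_k‖₂ ≤ α^{k+1}‖(z_r)_{U⊥}‖₂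 + 4(k+1)β. -/
open Matrix

/-- Euclidean norm of a vector in `ℝ^d`. -/
noncomputable def nrm {d : ℕ} (v : Fin d → ℝ) : ℝ := Real.sqrt (v ⬝ᵥ v)

/-- Orthogonal projection onto the column span of `U`: `v_U = UUᵀv`. -/
def pU {d dOne : ℕ} (U : Matrix (Fin d) (Fin dOne) ℝ) (v : Fin d → ℝ) : Fin d → ℝ :=
  U *ᵥ (Uᵀ *ᵥ v)

/-- Complementary projection: `v_{U⊥} = v − UUᵀv`. -/
def pPerp {d dOne : ℕ} (U : Matrix (Fin d) (Fin dOne) ℝ) (v : Fin d → ℝ) : Fin d → ℝ :=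
  v - pU U v

noncomputable def toE {d : ℕ} : (Fin d → ℝ) ≃ₗ[ℝ] EuclideanSpace ℝ (Fin d) :=
  (WithLp.linearEquiv 2 ℝ (Fin d → ℝ)).symm

lemma nrm_eq {d : ℕ} (v : Fin d → ℝ) : nrm v = ‖toE v‖ := by
  rw [nrm, EuclideanSpace.norm_eq]
  congr 1
  simp [dotProduct, toE, Real.norm_eq_abs, sq_abs, pow_two]

lemma nrm_nonneg' {d : ℕ} (v : Fin d → ℝ) : 0 ≤ nrm v := Real.sqrt_nonneg _

lemma nrm_sub_le {d : ℕ} (u v : Fin d → ℝ) : nrm (u - v) ≤ nrm u + nrm v := by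
  simp only [nrm_eq, map_sub]; exact norm_sub_le _ _

lemma nrm_sub_comm {d : ℕ} (u v : Fin d → ℝ) : nrm (u - v) = nrm (v - u) := by
  simp only [nrm_eq, map_sub]; exact norm_sub_rev _ _

lemma nrm_neg {d : ℕ} (v : Fin d → ℝ) : nrm (-v) = nrm v := by
  simp only [nrm_eq, map_neg, norm_neg]

lemma nrm_sum_le {d : ℕ} (n : ℕ) (f : ℕ → Fin d → ℝ) :
    nrm (∑ τ ∈ Finset.range n, f τ) ≤ ∑ τ ∈ Finset.range n, nrm (f τ) := by
  simp only [nrm_eq, map_sum]; exact norm_sum_le _ _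

lemma pU_eq {d dOne : ℕ} (U : Matrix (Fin d) (Fin dOne) ℝ) (v : Fin d → ℝ) :
    pU U v = Matrix.mulVecLin (U * Uᵀ) v := by
  rw [pU, Matrix.mulVec_mulVec, Matrix.mulVecLin_apply]

lemma pU_sub {d dOne : ℕ} (U : Matrix (Fin d) (Fin dOne) ℝ) (a b : Fin d → ℝ) :
    pU U (a - b) = pU U a - pU U b := by
  simp only [pU_eq, map_sub]

lemma pU_sum {d dOne : ℕ} (U : Matrix (Fin d) (Fin dOne) ℝ) (n : ℕ) (f : ℕ → Fin d → ℝ) :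
    pU U (∑ τ ∈ Finset.range n, f τ) = ∑ τ ∈ Finset.range n, pU U (f τ) := by
  simp only [pU_eq, map_sum]

lemma pU_idem {d dOne : ℕ} {U : Matrix (Fin d) (Fin dOne) ℝ} (hU : Uᵀ * U = 1)
    (v : Fin d → ℝ) : pU U (pU U v) = pU U v := by
  simp [pU, Matrix.mulVec_mulVec, ← Matrix.mul_assoc, Matrix.mul_assoc U (Uᵀ * U), hU,
    Matrix.mul_assoc (U * Uᵀ) U, Matrix.mul_assoc U]

lemma pU_pPerp {d dOne : ℕ} {U : Matrix (Fin d) (Fin dOne) ℝ} (hU : Uᵀ * U = 1)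
    (v : Fin d → ℝ) : pU U (pPerp U v) = 0 := by
  rw [pPerp, pU_sub, pU_idem hU, sub_self]

lemma transpose_mulVec_pPerp {d dOne : ℕ} {U : Matrix (Fin d) (Fin dOne) ℝ} (hU : Uᵀ * U = 1)
    (v : Fin d → ℝ) : Uᵀ *ᵥ pPerp U v = 0 := by
  simp [pPerp, pU, Matrix.mulVec_sub, Matrix.mulVec_mulVec, ← Matrix.mul_assoc, hU]

lemma pPerp_vecMul {d dOne : ℕ} {U : Matrix (Fin d) (Fin dOne) ℝ} (hU : Uᵀ * U = 1)
    (v : Fin d → ℝ) : pPerp U v ᵥ* U = 0 := by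
  rw [← Matrix.transpose_transpose U, Matrix.vecMul_transpose, Matrix.transpose_transpose,
    transpose_mulVec_pPerp hU]

lemma dot_pU_pPerp' {d dOne : ℕ} {U : Matrix (Fin d) (Fin dOne) ℝ} (hU : Uᵀ * U = 1)
    (u v : Fin d → ℝ) : pU U u ⬝ᵥ pPerp U v = 0 := by
  rw [pU, dotProduct_comm, Matrix.dotProduct_mulVec, pPerp_vecMul hU,
    zero_dotProduct]

lemma dot_split {d dOne : ℕ} {U : Matrix (Fin d) (Fin dOne) ℝ} (hU : Uᵀ * U = 1)
    (v : Fin d → ℝ) : v ⬝ᵥ v = pU U v ⬝ᵥ pU U v + pPerp U v ⬝ᵥ pPerp U v := by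
  have h1 : v = pU U v + pPerp U v := by rw [pPerp]; abel
  have h2 : pPerp U v ⬝ᵥ pU U v = 0 := by
    rw [dotProduct_comm]; exact dot_pU_pPerp' hU v v
  calc v ⬝ᵥ v = (pU U v + pPerp U v) ⬝ᵥ (pU U v + pPerp U v) := by rw [← h1]
  _ = pU U v ⬝ᵥ pU U v + pPerp U v ⬝ᵥ pPerp U v := by
      rw [add_dotProduct, dotProduct_add, dotProduct_add,
        dot_pU_pPerp' hU, h2]; ring

lemma nrm_pU_le {d dOne : ℕ} {U : Matrix (Fin d) (Fin dOne) ℝ} (hU : Uᵀ * U = 1)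
    (v : Fin d → ℝ) : nrm (pU U v) ≤ nrm v := by
  rw [nrm, nrm]
  apply Real.sqrt_le_sqrt
  rw [dot_split hU v]
  have h0 : (0:ℝ) ≤ pPerp U v ⬝ᵥ pPerp U v := Finset.sum_nonneg fun i _ => mul_self_nonneg _
  linarith

lemma nrm_pPerp_le {d dOne : ℕ} {U : Matrix (Fin d) (Fin dOne) ℝ} (hU : Uᵀ * U = 1)
    (v : Fin d → ℝ) : nrm (pPerp U v) ≤ nrm v := by
  rw [nrm, nrm]
  apply Real.sqrt_le_sqrt
  rw [dot_split hU v]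
  have h0 : (0:ℝ) ≤ pU U v ⬝ᵥ pU U v := Finset.sum_nonneg fun i _ => mul_self_nonneg _
  linarith

lemma geo_eq (n : ℕ) : ∑ τ ∈ Finset.range n, (1/3:ℝ)^(τ+1) = (1 - (1/3:ℝ)^n)/2 := by
  induction n with
  | zero => simp
  | succ n ihn => rw [Finset.sum_range_succ, ihn, pow_succ]; ring

lemma geo_half (n : ℕ) : ∑ τ ∈ Finset.range n, (1/3:ℝ)^(τ+1) ≤ 1/2 := by
  rw [geo_eq]
  have : (0:ℝ) ≤ (1/3:ℝ)^n := by positivity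
  linarith

/-- Lemma 4.7: inner loop of the hardness-amplification procedure.
With `α = 1/3` and `(α, β)`-approximate projection oracles producing `w₀` and `y_k`,
the error vectors `δ_k` satisfy the stated recursion and geometric decay bounds. -/
theorem inner_loop_induction {d dOne : ℕ} (hdOne : dOne ≤ d)
    (U : Matrix (Fin d) (Fin dOne) ℝ) (hU : Uᵀ * U = 1)
    (β : ℝ) (hβ : 0 ≤ β)
    (K : ℕ) (hK : 1 ≤ K) (hKβ : 4 * (K : ℝ) ^ 2 * β ≤ 1)
    (zr : Fin d → ℝ) (hzr : nrm zr ≤ 2)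
    (w y δ : ℕ → Fin d → ℝ)
    (hw0 : nrm (w 0 - pPerp U zr) ≤ (1 / 3) * nrm (pPerp U zr) + β * nrm zr)
    (hy : ∀ k, 1 ≤ k → k ≤ K →
      nrm (y k - pU U (w (k - 1))) ≤ (1 / 3) * nrm (pU U (w (k - 1))) + β * nrm (w (k - 1)))
    (hw : ∀ k, 1 ≤ k → k ≤ K → w k = w (k - 1) - y k)
    (hδ0 : δ 0 = pPerp U zr - w 0)
    (hδ : ∀ k, 1 ≤ k → k ≤ K → δ k = y k + pU U (δ (k - 1))) :
    ∀ k, 1 ≤ k → k ≤ K →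
      w k = pPerp U zr - (∑ τ ∈ Finset.range k, pPerp U (δ τ)) - δ k ∧
      nrm (δ k) ≤ (1 / 3) * nrm (pU U (δ (k - 1))) + 4 * β ∧
      nrm (δ k) ≤ (1 / 3 : ℝ) ^ (k + 1) * nrm (pPerp U zr) + 4 * ((k : ℝ) + 1) * β := by
  have hpz : nrm (pPerp U zr) ≤ 2 := (nrm_pPerp_le hU zr).trans hzr
  have main : ∀ k, k ≤ K →
      (w k = pPerp U zr - (∑ τ ∈ Finset.range k, pPerp U (δ τ)) - δ k) ∧
      (nrm (δ k) ≤ (1/3:ℝ)^(k+1) * nrm (pPerp U zr) + 4*((k:ℝ)+1)*β) ∧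
      (1 ≤ k → nrm (δ k) ≤ (1/3) * nrm (pU U (δ (k-1))) + 4*β) := by
    intro k
    induction k using Nat.strong_induction_on with
    | _ k ih =>
      cases k with
      | zero =>
        intro _
        refine ⟨?_, ?_, fun h => absurd h (by omega)⟩
        · rw [hδ0, Finset.sum_range_zero]; abel
        · have h1 : nrm (δ 0) ≤ 1/3 * nrm (pPerp U zr) + β * nrm zr := by
            rw [hδ0, nrm_sub_comm]; exact hw0
          have h2 : β * nrm zr ≤ 2 * β := by nlinarith [nrm_nonneg' zr]
          push_cast
          norm_num
          nlinarith
      | succ m =>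
        intro hm1K
        obtain ⟨Im, Bm, -⟩ := ih m (by omega) (by omega)
        -- bound on the sum of delta norms
        have h1 : ∑ τ ∈ Finset.range (m+1), nrm (δ τ)
            ≤ ∑ τ ∈ Finset.range (m+1),
                ((1/3:ℝ)^(τ+1) * nrm (pPerp U zr) + 4*((τ:ℝ)+1)*β) :=
          Finset.sum_le_sum fun τ hτ =>
            (ih τ (Finset.mem_range.mp hτ)
              (by have := Finset.mem_range.mp hτ; omega)).2.1
        have h2 : ∑ τ ∈ Finset.range (m+1), (1/3:ℝ)^(τ+1) * nrm (pPerp U zr) ≤ 1 := by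
          rw [← Finset.sum_mul]
          have hg := geo_half (m+1)
          have hgnn : (0:ℝ) ≤ ∑ τ ∈ Finset.range (m+1), (1/3:ℝ)^(τ+1) :=
            Finset.sum_nonneg fun τ _ => by positivity
          nlinarith [nrm_nonneg' (pPerp U zr)]
        have h3 : ∑ τ ∈ Finset.range (m+1), 4*((τ:ℝ)+1)*β ≤ 1 := by
          have hb : ∀ τ ∈ Finset.range (m+1), 4*((τ:ℝ)+1)*β ≤ 4*((m:ℝ)+1)*β := by
            intro τ hτ
            have : (τ:ℝ) ≤ (m:ℝ) := by
              exact_mod_cast Nat.lt_succ_iff.mp (Finset.mem_range.mp hτ)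
            nlinarith
          have := Finset.sum_le_card_nsmul (Finset.range (m+1)) _ _ hb
          rw [Finset.card_range, nsmul_eq_mul] at this
          have hmK : ((m:ℝ)+1) ≤ (K:ℝ) := by exact_mod_cast hm1K
          have hm0 : (0:ℝ) ≤ (m:ℝ) := Nat.cast_nonneg m
          have hK0 : (0:ℝ) ≤ (K:ℝ) := Nat.cast_nonneg K
          push_cast at this
          have hmm : ((m:ℝ)+1)*((m:ℝ)+1) ≤ (K:ℝ)*(K:ℝ) :=
            mul_le_mul hmK hmK (by linarith) hK0
          have hmmb : ((m:ℝ)+1)*((m:ℝ)+1)*β ≤ (K:ℝ)*(K:ℝ)*β :=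
            mul_le_mul_of_nonneg_right hmm hβ
          nlinarith
        have hsum : ∑ τ ∈ Finset.range (m+1), nrm (δ τ) ≤ 2 := by
          rw [Finset.sum_add_distrib] at h1
          linarith
        -- bound on nrm (w m)
        have t2 : nrm (∑ τ ∈ Finset.range m, pPerp U (δ τ))
            ≤ ∑ τ ∈ Finset.range m, nrm (δ τ) :=
          (nrm_sum_le m _).trans (Finset.sum_le_sum fun τ _ => nrm_pPerp_le hU _)
        have t3 : ∑ τ ∈ Finset.range m, nrm (δ τ) + nrm (δ m) ≤ 2 := by
          rw [← Finset.sum_range_succ]; exact hsum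
        have hwm : nrm (w m) ≤ 4 := by
          rw [Im]
          calc nrm (pPerp U zr - (∑ τ ∈ Finset.range m, pPerp U (δ τ)) - δ m)
              ≤ nrm (pPerp U zr - (∑ τ ∈ Finset.range m, pPerp U (δ τ))) + nrm (δ m) :=
                nrm_sub_le _ _
            _ ≤ nrm (pPerp U zr) + nrm (∑ τ ∈ Finset.range m, pPerp U (δ τ)) + nrm (δ m) := by
                linarith [nrm_sub_le (pPerp U zr) (∑ τ ∈ Finset.range m, pPerp U (δ τ))]
            _ ≤ 4 := by linarith
        -- key identity
        have hpUwm : pU U (w m) = - pU U (δ m) := by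
          rw [Im, pU_sub, pU_sub, pU_sum, pU_pPerp hU]
          have hz : ∀ τ ∈ Finset.range m, pU U (pPerp U (δ τ)) = 0 := fun τ _ => pU_pPerp hU _
          rw [Finset.sum_congr rfl hz, Finset.sum_const_zero]
          abel
        have hδm1 : δ (m+1) = y (m+1) - pU U (w m) := by
          rw [hδ (m+1) (by omega) hm1K, Nat.add_sub_cancel, hpUwm, sub_neg_eq_add]
        have hy' := hy (m+1) (by omega) hm1K
        rw [Nat.add_sub_cancel] at hy'
        have hnpuwm : nrm (pU U (w m)) = nrm (pU U (δ m)) := by rw [hpUwm, nrm_neg]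
        have part2 : nrm (δ (m+1)) ≤ 1/3 * nrm (pU U (δ m)) + 4*β := by
          rw [hδm1, ← hnpuwm]
          nlinarith [hy', hwm, hβ]
        have part3 : nrm (δ (m+1))
            ≤ (1/3:ℝ)^(m+1+1) * nrm (pPerp U zr) + 4*(((m:ℝ)+1)+1)*β := by
          have hcontr : nrm (pU U (δ m)) ≤ nrm (δ m) := nrm_pU_le hU _
          have hm0 : (0:ℝ) ≤ (m:ℝ) := Nat.cast_nonneg m
          rw [pow_succ]
          nlinarith [nrm_nonneg' (δ m), nrm_nonneg' (pPerp U zr)]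
        refine ⟨?_, by push_cast; exact part3, fun _ => by
          rw [Nat.add_sub_cancel]; exact part2⟩
        -- invariant at m+1
        rw [hw (m+1) (by omega) hm1K, Nat.add_sub_cancel, Im, Finset.sum_range_succ,
          hδ (m+1) (by omega) hm1K, Nat.add_sub_cancel]
        have hpp : pPerp U (δ m) = δ m - pU U (δ m) := rfl
        rw [hpp]
        abel
  intro k hk1 hkK
  obtain ⟨i, b, ii⟩ := main k hkK
  exact ⟨i, ii hk1, b⟩
end

section
/- Let d₁ ∈ {0,…,d} and let U ∈ ℝ^{d×d₁} have orthonormal columns (UᵀU = I). For v ∈ ℝ^d write v_U = UUᵀv and v_{U⊥} = v − UUᵀv. Let α = 1/3, and let K ≥ 2, R ≥ 1, β ≥ 0 satisfy (1/3)^K ≤ β and 100·R·K⁴·β ≤ 1. Let z₁ ∈ ℝ^d with ‖z₁‖₂ = 1, and suppose that for each round r ∈ [R] there are vectors w_{r,0}, …, w_{r,K} and y_{r,1}, …, y_{r,K} satisfying: ‖w_{r,0} − (z_r)_{U⊥}‖₂ ≤ α‖(z_r)_{U⊥}‖₂ + β‖z_r‖₂; for each k ∈ [K], ‖y_{r,k}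 − (w_{r,k−1})_U‖₂ ≤ α‖(w_{r,k−1})_U‖₂ + β‖w_{r,k−1}‖₂ and w_{r,k} = w_{r,k−1} − y_{r,k}; and z_{r+1} = z_r − w_{r,K}. Then ‖z_r‖₂ ≤ 2 for all r ∈ [R+1], and the final iterate satisfies ‖z_{R+1} − UUᵀz₁‖₂ ≤ 4R(K+2)β + (2/3)^R + 12K²β. -/
open Matrix

namespace HAcore
variable {d dOne : ℕ}

noncomputable def toE {d : ℕ} (v : Fin d → ℝ) : EuclideanSpace ℝ (Fin d) :=
  (WithLp.equiv 2 _).symm v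

lemma nrm_eq (v : Fin d → ℝ) : nrm v = ‖toE v‖ := by
  rw [EuclideanSpace.norm_eq]
  unfold nrm dotProduct
  congr 1
  refine Finset.sum_congr rfl fun i _ => ?_
  simp [toE, Real.norm_eq_abs, sq_abs, sq]

lemma nrm_nonneg (v : Fin d → ℝ) : 0 ≤ nrm v := Real.sqrt_nonneg _

lemma nrm_add_le (a b : Fin d → ℝ) : nrm (a+b) ≤ nrm a + nrm b := by
  rw [nrm_eq, nrm_eq, nrm_eq]; exact norm_add_le (toE a) (toE b)

lemma nrm_neg (a : Fin d → ℝ) : nrm (-a) = nrm a := by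
  rw [nrm_eq, nrm_eq]; exact norm_neg (toE a)

lemma nrm_sub_le (a b : Fin d → ℝ) : nrm (a-b) ≤ nrm a + nrm b := by
  have := nrm_add_le a (-b); rw [nrm_neg] at this; simpa [sub_eq_add_neg] using this

lemma nrm_triangle (a b c : Fin d → ℝ) : nrm (a - c) ≤ nrm (a - b) + nrm (b - c) := by
  have h : a - c = (a - b) + (b - c) := by abel
  rw [h]; exact nrm_add_le _ _

lemma nrm_le_add (a b : Fin d → ℝ) : nrm a ≤ nrm (a - b) + nrm b := by
  have h : a = (a - b) + b := by abel
  calc nrm a = nrm ((a - b) + b) := by rw [← h]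
    _ ≤ _ := nrm_add_le _ _

-- dot products
lemma mulVec_dot (U : Matrix (Fin d) (Fin dOne) ℝ) (x : Fin dOne → ℝ) (w : Fin d → ℝ) :
    (U *ᵥ x) ⬝ᵥ w = x ⬝ᵥ (Uᵀ *ᵥ w) := by
  rw [dotProduct_comm, Matrix.dotProduct_mulVec, ← Matrix.mulVec_transpose,
    dotProduct_comm]

variable {U : Matrix (Fin d) (Fin dOne) ℝ}

lemma UtU (hU : Uᵀ * U = 1) (x : Fin dOne → ℝ) : Uᵀ *ᵥ (U *ᵥ x) = x := by
  rw [Matrix.mulVec_mulVec, hU, Matrix.one_mulVec]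

lemma pU_add (a b : Fin d → ℝ) : pU U (a + b) = pU U a + pU U b := by
  simp [pU, Matrix.mulVec_add]
lemma pU_sub (a b : Fin d → ℝ) : pU U (a - b) = pU U a - pU U b := by
  simp [pU, Matrix.mulVec_sub]
lemma pU_pU (hU : Uᵀ * U = 1) (v : Fin d → ℝ) : pU U (pU U v) = pU U v := by
  unfold pU; rw [UtU hU]
lemma pU_pPerp (hU : Uᵀ * U = 1) (v : Fin d → ℝ) : pU U (pPerp U v) = 0 := by
  rw [pPerp, pU_sub, pU_pU hU, sub_self]
lemma pPerp_pU (hU : Uᵀ * U = 1) (v : Fin d → ℝ) : pPerp U (pU U v) = 0 := by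
  rw [pPerp, pU_pU hU, sub_self]
lemma pPerp_sub (a b : Fin d → ℝ) : pPerp U (a - b) = pPerp U a - pPerp U b := by
  rw [pPerp, pPerp, pPerp, pU_sub]; abel
lemma pPerp_pPerp (hU : Uᵀ * U = 1) (v : Fin d → ℝ) : pPerp U (pPerp U v) = pPerp U v := by
  conv_lhs => rw [pPerp, pU_pPerp hU, sub_zero]

lemma pU_dot (hU : Uᵀ * U = 1) (v w : Fin d → ℝ) :
    pU U v ⬝ᵥ pU U w = (Uᵀ *ᵥ v) ⬝ᵥ (Uᵀ *ᵥ w) := by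
  rw [pU, pU, mulVec_dot, UtU hU]
lemma pU_dot' (v w : Fin d → ℝ) : pU U v ⬝ᵥ w = (Uᵀ *ᵥ v) ⬝ᵥ (Uᵀ *ᵥ w) := by
  rw [pU, mulVec_dot]

lemma pU_dot_pPerp (hU : Uᵀ * U = 1) (v w : Fin d → ℝ) : pU U v ⬝ᵥ pPerp U w = 0 := by
  rw [pPerp, dotProduct_sub, pU_dot hU, pU_dot']
  ring

lemma dot_self_nonneg' (v : Fin d → ℝ) : 0 ≤ v ⬝ᵥ v :=
  Finset.sum_nonneg fun _ _ => mul_self_nonneg _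

lemma pythagoras (hU : Uᵀ * U = 1) (v : Fin d → ℝ) :
    v ⬝ᵥ v = pU U v ⬝ᵥ pU U v + pPerp U v ⬝ᵥ pPerp U v := by
  have hv : v = pU U v + pPerp U v := by rw [pPerp]; abel
  have h1 : pU U v ⬝ᵥ pPerp U v = 0 := pU_dot_pPerp hU v v
  have h2 : pPerp U v ⬝ᵥ pU U v = 0 := by rw [dotProduct_comm]; exact h1
  calc v ⬝ᵥ v = (pU U v + pPerp U v) ⬝ᵥ (pU U v + pPerp U v) := by rw [← hv]
    _ = _ := by
        rw [add_dotProduct, dotProduct_add, dotProduct_add, h1, h2]; ring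

lemma nrm_pU_le (hU : Uᵀ * U = 1) (v : Fin d → ℝ) : nrm (pU U v) ≤ nrm v := by
  apply Real.sqrt_le_sqrt
  have := dot_self_nonneg' (pPerp U v)
  rw [pythagoras hU v]; linarith

lemma nrm_pPerp_le (hU : Uᵀ * U = 1) (v : Fin d → ℝ) : nrm (pPerp U v) ≤ nrm v := by
  apply Real.sqrt_le_sqrt
  have := dot_self_nonneg' (pU U v)
  rw [pythagoras hU v]; linarith

/-- One outer round of the refinement procedure. -/
lemma round_step (hU : Uᵀ * U = 1)
    (β : ℝ) (hβ : 0 ≤ β) (hβ' : β ≤ 1/1600) (K : ℕ) (hK : 2 ≤ K)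
    (hβK : (1/3:ℝ)^K ≤ β) (hKβ : (K:ℝ)*β ≤ 1/800)
    (zr : Fin d → ℝ) (hzr : nrm zr ≤ 2)
    (w y : ℕ → Fin d → ℝ)
    (hw0 : nrm (w 0 - pPerp U zr) ≤ (1/3) * nrm (pPerp U zr) + β * nrm zr)
    (hy : ∀ k, 1 ≤ k → k ≤ K →
      nrm (y k - pU U (w (k-1))) ≤ (1/3) * nrm (pU U (w (k-1))) + β * nrm (w (k-1)))
    (hw : ∀ k, 1 ≤ k → k ≤ K → w k = w (k-1) - y k) :
    nrm (pPerp U (zr - w K)) ≤ (1/2) * nrm (pPerp U zr) + 3*β + 6*(K:ℝ)*β ∧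
    nrm (pU U (zr - w K) - pU U zr) ≤ 7*β := by
  set a := nrm (pPerp U zr) with ha_def
  set s := nrm zr with hs_def
  set e₀ := (1/3:ℝ) * a + β * s with he₀_def
  have ha2 : a ≤ 2 := le_trans (nrm_pPerp_le hU zr) hzr
  have ha0 : 0 ≤ a := nrm_nonneg _
  have hs0 : 0 ≤ s := nrm_nonneg _
  clear_value a s e₀
  have hβs : β * s ≤ β * 2 := mul_le_mul_of_nonneg_left hzr hβ
  have he₀1 : e₀ ≤ 1 := by rw [he₀_def]; linarith
  have he₀0 : 0 ≤ e₀ := by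
    rw [he₀_def]; positivity
  have INV : ∀ k, k ≤ K →
      nrm (pU U (w k)) ≤ (1/3:ℝ)^k * e₀ + 6*β ∧
      nrm (w k) ≤ 4 - (1/2)*(1/3:ℝ)^k - 6*((K:ℝ)-(k:ℝ))*β ∧
      nrm (pPerp U (w k) - pPerp U zr) ≤ (1 + (1/2)*(1-(1/3:ℝ)^k)) * e₀ + 6*(k:ℝ)*β := by
    intro k
    induction k with
    | zero =>
      intro _
      have hE0 : nrm (w 0 - pPerp U zr) ≤ e₀ := hw0
      have h1 : pU U (w 0) = pU U (w 0 - pPerp U zr) := by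
        rw [pU_sub, pU_pPerp hU, sub_zero]
      have h2 : pPerp U (w 0) - pPerp U zr = pPerp U (w 0 - pPerp U zr) := by
        rw [pPerp_sub, pPerp_pPerp hU]
      have hw0' : nrm (w 0) ≤ a + e₀ := by
        calc nrm (w 0) ≤ nrm (w 0 - pPerp U zr) + nrm (pPerp U zr) := nrm_le_add _ _
          _ ≤ a + e₀ := by rw [← ha_def]; linarith
      refine ⟨?_, ?_, ?_⟩
      · rw [h1]; simp only [pow_zero, one_mul]
        calc nrm (pU U (w 0 - pPerp U zr)) ≤ nrm (w 0 - pPerp U zr) := nrm_pU_le hU _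
          _ ≤ e₀ := hE0
          _ ≤ e₀ + 6*β := by linarith
      · simp only [Nat.cast_zero, pow_zero, sub_zero]
        rw [he₀_def] at hw0'
        linarith
      · rw [h2]; simp only [Nat.cast_zero, pow_zero]
        calc nrm (pPerp U (w 0 - pPerp U zr)) ≤ nrm (w 0 - pPerp U zr) := nrm_pPerp_le hU _
          _ ≤ e₀ := hE0
          _ = (1 + 1/2*(1-1)) * e₀ + 6*0*β := by ring
    | succ k ih =>
      intro hk1
      obtain ⟨hp, hm, hq⟩ := ih (by omega)
      have hkK : (k:ℝ) ≤ (K:ℝ) := by exact_mod_cast Nat.le_of_succ_le hk1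
      have hwk : w (k+1) = w k - y (k+1) := by
        have := hw (k+1) (by omega) hk1
        simpa using this
      have hyk := hy (k+1) (by omega) hk1
      simp only [Nat.add_sub_cancel] at hyk
      set E := y (k+1) - pU U (w k) with hE_def
      have hw1 : w (k+1) = pPerp U (w k) - E := by
        rw [hwk, pPerp, hE_def]; abel
      have hid1 : pU U (w (k+1)) = -(pU U E) := by
        rw [hw1, pU_sub, pU_pPerp hU, zero_sub]
      have np1 : nrm (pU U (w (k+1))) ≤ nrm E := by
        rw [hid1, nrm_neg]; exact nrm_pU_le hU E
      have nm1 : nrm (w (k+1)) ≤ nrm (w k) + nrm E := by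
        rw [hw1]
        have := nrm_pPerp_le hU (w k)
        have h := nrm_sub_le (pPerp U (w k)) E
        linarith
      have hid2 : pPerp U (w (k+1)) - pPerp U zr =
          (pPerp U (w k) - pPerp U zr) - pPerp U E := by
        rw [hw1, pPerp_sub, pPerp_pPerp hU]; abel
      have nq1 : nrm (pPerp U (w (k+1)) - pPerp U zr) ≤
          nrm (pPerp U (w k) - pPerp U zr) + nrm E := by
        rw [hid2]
        have := nrm_pPerp_le hU E
        have h := nrm_sub_le (pPerp U (w k) - pPerp U zr) (pPerp U E)
        linarith
      have ht0 : (0:ℝ) < (1/3:ℝ)^k := by positivity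
      have ht1 : (1/3:ℝ)^k ≤ 1 := pow_le_one₀ (by norm_num) (by norm_num)
      have hKk0 : 0 ≤ ((K:ℝ)-(k:ℝ))*β := mul_nonneg (by linarith) hβ
      have hm4 : nrm (w k) ≤ 4 := by linarith
      have hbm : β * nrm (w k) ≤ β * 4 := mul_le_mul_of_nonneg_left hm4 hβ
      have hte : (1/3:ℝ)^k * e₀ ≤ (1/3:ℝ)^k := mul_le_of_le_one_right ht0.le he₀1
      have hte0 : (0:ℝ) ≤ (1/3:ℝ)^k * e₀ := mul_nonneg ht0.le he₀0
      have hEb : nrm E ≤ (1/3) * nrm (pU U (w k)) + β * nrm (w k) := hyk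
      have hps : (1/3:ℝ)^(k+1) = (1/3:ℝ)^k * (1/3) := pow_succ _ _
      have hE2 : nrm E ≤ (1/3) * ((1/3:ℝ)^k * e₀ + 6*β) + β*4 := by
        linarith [hEb, hp, hbm]
      refine ⟨?_, ?_, ?_⟩
      · rw [hps]; push_cast; linarith [np1, hE2]
      · rw [hps]; push_cast; linarith [nm1, hm, hE2, hte]
      · rw [hps]; push_cast; linarith [nq1, hq, hE2]
  obtain ⟨hpK, hmK, hqK⟩ := INV K le_rfl
  have htK0 : (0:ℝ) ≤ (1/3:ℝ)^K * e₀ := by positivity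
  have htKe : (1/3:ℝ)^K * e₀ ≤ β * e₀ := mul_le_mul_of_nonneg_right hβK he₀0
  have hβe : β * e₀ ≤ β := by
    calc β * e₀ ≤ β * 1 := mul_le_mul_of_nonneg_left he₀1 hβ
      _ = β := mul_one β
  constructor
  · have hid : pPerp U (zr - w K) = -(pPerp U (w K) - pPerp U zr) := by
      rw [pPerp_sub]; abel
    rw [hid, nrm_neg]
    linarith [hqK, htK0, hβs, he₀_def.le, he₀_def.ge]
  · have hid : pU U (zr - w K) - pU U zr = -(pU U (w K)) := by
      rw [pU_sub]; abel
    rw [hid, nrm_neg]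
    linarith [hpK, htKe, hβe]

end HAcore

/-- deterministic core of Lemma 4.4, hardness amplification.
Running `R` outer rounds of `K` inner refinement iterations with `(1/3, β)`-approximate
projection oracles, starting from a unit vector `z₁`, all iterates stay bounded by `2` and
the final iterate approximates the projection `UUᵀz₁` to accuracy
`4R(K+2)β + (2/3)^R + 12K²β`. -/
theorem hardness_amplification_core {d dOne : ℕ} (hdOne : dOne ≤ d)
    (U : Matrix (Fin d) (Fin dOne) ℝ) (hU : Uᵀ * U = 1)
    (β : ℝ) (hβ : 0 ≤ β)
    (K R : ℕ) (hK : 2 ≤ K) (hR : 1 ≤ R)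
    (hβK : (1 / 3 : ℝ) ^ K ≤ β) (hRKβ : 100 * (R : ℝ) * (K : ℝ) ^ 4 * β ≤ 1)
    (z : ℕ → Fin d → ℝ) (hz1 : nrm (z 1) = 1)
    (w y : ℕ → ℕ → Fin d → ℝ)
    (hw0 : ∀ r, 1 ≤ r → r ≤ R →
      nrm (w r 0 - pPerp U (z r)) ≤ (1 / 3) * nrm (pPerp U (z r)) + β * nrm (z r))
    (hy : ∀ r, 1 ≤ r → r ≤ R → ∀ k, 1 ≤ k → k ≤ K →
      nrm (y r k - pU U (w r (k - 1))) ≤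
        (1 / 3) * nrm (pU U (w r (k - 1))) + β * nrm (w r (k - 1)))
    (hw : ∀ r, 1 ≤ r → r ≤ R → ∀ k, 1 ≤ k → k ≤ K → w r k = w r (k - 1) - y r k)
    (hzrec : ∀ r, 1 ≤ r → r ≤ R → z (r + 1) = z r - w r K) :
    (∀ r, 1 ≤ r → r ≤ R + 1 → nrm (z r) ≤ 2) ∧
    nrm (z (R + 1) - pU U (z 1)) ≤
      4 * (R : ℝ) * ((K : ℝ) + 2) * β + (2 / 3 : ℝ) ^ R + 12 * (K : ℝ) ^ 2 * β := by
  have hK2 : (2:ℝ) ≤ (K:ℝ) := by exact_mod_cast hK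
  have hR1 : (1:ℝ) ≤ (R:ℝ) := by exact_mod_cast hR
  have hK4 : (16:ℝ) ≤ (K:ℝ)^4 := by
    have := pow_le_pow_left₀ (by norm_num : (0:ℝ) ≤ 2) hK2 4
    norm_num at this; linarith
  have hK3 : (8:ℝ) ≤ (K:ℝ)^3 := by
    have := pow_le_pow_left₀ (by norm_num : (0:ℝ) ≤ 2) hK2 3
    norm_num at this; linarith
  have t1 : 0 ≤ ((R:ℝ)-1) * ((K:ℝ)^4 * β) :=
    mul_nonneg (by linarith) (mul_nonneg (by positivity) hβ)
  have t2 : 0 ≤ ((K:ℝ)^4 - 16) * β := mul_nonneg (by linarith) hβ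
  have t3 : 0 ≤ ((K:ℝ)^3 - 8) * ((K:ℝ)*β) :=
    mul_nonneg (by linarith) (mul_nonneg (by positivity) hβ)
  have t4 : 0 ≤ ((K:ℝ)^4 - 16) * ((R:ℝ)*β) :=
    mul_nonneg (by linarith) (mul_nonneg (by positivity) hβ)
  have hβ' : β ≤ 1/1600 := by nlinarith [t1, t2]
  have hKβ' : (K:ℝ)*β ≤ 1/800 := by nlinarith [t1, t3]
  have hRβ : (R:ℝ)*β ≤ 1/1600 := by nlinarith [t4]
  have hKβ0 : 0 ≤ (K:ℝ)*β := mul_nonneg (by positivity) hβ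
  -- helper: if the invariant holds at r, then ‖z r‖ ≤ 2
  have hbound : ∀ r : ℕ, 1 ≤ r → (r:ℝ) - 1 ≤ (R:ℝ) →
      nrm (pU U (z r) - pU U (z 1)) ≤ 7*((r:ℝ)-1)*β →
      nrm (pPerp U (z r)) ≤ (1/2:ℝ)^(r-1) + 15*(K:ℝ)*β →
      nrm (z r) ≤ 2 := by
    intro r hr hrR hP hQ
    rcases Nat.lt_or_ge r 2 with h2 | h2
    · have hr1 : r = 1 := by omega
      subst hr1
      rw [hz1]; norm_num
    · have hrw : z r = pU U (z r) + pPerp U (z r) := by rw [pPerp]; abel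
      have h1 : nrm (z r) ≤ nrm (pU U (z r)) + nrm (pPerp U (z r)) := by
        calc nrm (z r) = nrm (pU U (z r) + pPerp U (z r)) := by rw [← hrw]
          _ ≤ _ := HAcore.nrm_add_le _ _
      have h2' : nrm (pU U (z r)) ≤ nrm (pU U (z r) - pU U (z 1)) + nrm (pU U (z 1)) :=
        HAcore.nrm_le_add _ _
      have h3 : nrm (pU U (z 1)) ≤ 1 := by
        rw [← hz1]; exact HAcore.nrm_pU_le hU _
      have h4 : (1/2:ℝ)^(r-1) ≤ (1/2:ℝ)^1 :=
        pow_le_pow_of_le_one (by norm_num) (by norm_num) (by omega)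
      have h5 : ((r:ℝ)-1)*β ≤ (R:ℝ)*β := mul_le_mul_of_nonneg_right hrR hβ
      norm_num at h4
      linarith
  have INV : ∀ r, 1 ≤ r → r ≤ R + 1 →
      nrm (pU U (z r) - pU U (z 1)) ≤ 7*((r:ℝ)-1)*β ∧
      nrm (pPerp U (z r)) ≤ (1/2:ℝ)^(r-1) + 15*(K:ℝ)*β := by
    intro r hr
    induction r, hr using Nat.le_induction with
    | base =>
      intro _
      constructor
      · simp only [sub_self, Nat.cast_one]
        have : nrm ((0:Fin d → ℝ)) = 0 := by
          simp [nrm, dotProduct, Real.sqrt_zero]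
        rw [this]
        norm_num
      · simp only [Nat.sub_self, pow_zero, Nat.cast_one]
        have : nrm (pPerp U (z 1)) ≤ 1 := by
          rw [← hz1]; exact HAcore.nrm_pPerp_le hU _
        linarith
    | succ r hr' ih =>
      intro hr1
      have hrR : r ≤ R := by omega
      obtain ⟨ihP, ihQ⟩ := ih (by omega)
      have hrRr : (r:ℝ) - 1 ≤ (R:ℝ) := by
        have : (r:ℝ) ≤ (R:ℝ) := by exact_mod_cast hrR
        linarith
      have hz2 : nrm (z r) ≤ 2 := hbound r hr' hrRr ihP ihQ
      have hrs := HAcore.round_step hU β hβ hβ' K hK hβK hKβ' (z r) hz2 (w r) (y r)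
        (hw0 r hr' hrR) (fun k hk1 hkK => hy r hr' hrR k hk1 hkK)
        (fun k hk1 hkK => hw r hr' hrR k hk1 hkK)
      rw [← hzrec r hr' hrR] at hrs
      obtain ⟨hQ', hP'⟩ := hrs
      constructor
      · have htri : nrm (pU U (z (r+1)) - pU U (z 1)) ≤
            nrm (pU U (z (r+1)) - pU U (z r)) + nrm (pU U (z r) - pU U (z 1)) :=
          HAcore.nrm_triangle _ _ _
        push_cast
        linarith
      · have hpow : (1/2:ℝ)^(r+1-1) = (1/2:ℝ)^(r-1) * (1/2) := by
          rw [Nat.add_sub_cancel, ← pow_succ, Nat.sub_add_cancel hr']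
        rw [hpow]
        have h2β : 2*β ≤ (K:ℝ)*β := mul_le_mul_of_nonneg_right hK2 hβ
        linarith
  obtain ⟨hPf, hQf⟩ := INV (R+1) (by omega) le_rfl
  constructor
  · intro r hr hrR1
    obtain ⟨hP, hQ⟩ := INV r hr hrR1
    apply hbound r hr _ hP hQ
    have : (r:ℝ) ≤ (R:ℝ) + 1 := by exact_mod_cast hrR1
    linarith
  · have hid : z (R+1) - pU U (z 1) =
        pPerp U (z (R+1)) + (pU U (z (R+1)) - pU U (z 1)) := by
      rw [pPerp]; abel
    have h1 : nrm (z (R+1) - pU U (z 1)) ≤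
        nrm (pPerp U (z (R+1))) + nrm (pU U (z (R+1)) - pU U (z 1)) := by
      calc nrm (z (R+1) - pU U (z 1))
          = nrm (pPerp U (z (R+1)) + (pU U (z (R+1)) - pU U (z 1))) := by rw [← hid]
        _ ≤ _ := HAcore.nrm_add_le _ _
    rw [Nat.add_sub_cancel] at hQf
    push_cast at hPf
    have hpow : (1/2:ℝ)^R ≤ (2/3:ℝ)^R := by
      apply pow_le_pow_left₀ (by norm_num) (by norm_num)
    have hKK : 15*(K:ℝ)*β ≤ 12*(K:ℝ)^2*β := by
      have h : 0 ≤ ((3*(K:ℝ))*(4*(K:ℝ)-5)) * β :=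
        mul_nonneg (mul_nonneg (by linarith) (by linarith)) hβ
      linarith [h]
    have hRR : 7*(R:ℝ)*β ≤ 4*(R:ℝ)*((K:ℝ)+2)*β := by
      have h : 0 ≤ ((R:ℝ)*(4*(K:ℝ)+1)) * β :=
        mul_nonneg (mul_nonneg (by linarith) (by linarith)) hβ
      linarith [h]
    linarith
end

section
/- There is a constant D₀ such that the following holds for all d ≥ D₀. Let d₁ ∈ [d], let U ∈ ℝ^{d×d₁} and U⊥ ∈ ℝ^{d×(d−d₁)} have orthonormal columns with [U, U⊥] orthogonal. For v ∈ ℝ^d write v_U = UUᵀv and v_{U⊥} = U⊥U⊥ᵀv. Let λ = d^{−40}, ε = 1/100, x* = (1/√d)·Σ_{j=1}^{d−d₁} U⊥_{·,j}, and let z ∈ ℝ^d satisfy ‖z‖₂ ≤ 1 and ‖z_U‖₂ ≥ 1/d⁴. Set Δ = (10 − ⟨z_{U⊥}, x*⟩)/‖z_U‖₂, let L(x) = ‖U⊥ᵀ x − (1/√d)·1_{d−d₁}‖₂² + (1/100)·(⟨z, x⟩ − 10)² + λ‖x‖₂², and let V = [U⊥, z_U/‖z_U‖₂]. Then Δ ∈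 (9, 11d⁴], and every x ∈ ℝ^d with L(x) ≤ (1+ε)²·λ·(Δ² + 1) satisfies: (a) ‖U⊥U⊥ᵀ x − x*‖₂ ≤ 20 d⁴ √λ; (b) |⟨x, z_U⟩ − (10 − ⟨z_{U⊥}, x*⟩)| ≤ 200 d⁴ √λ; and (c) ‖(I − V Vᵀ) x‖₂ ≤ 2√ε · Δ. -/
open Matrix

lemma myDotSelfNonneg {n : ℕ} (v : Fin n → ℝ) : 0 ≤ v ⬝ᵥ v :=
  Finset.sum_nonneg fun _ _ => mul_self_nonneg _

lemma myCS {n : ℕ} (u v : Fin n → ℝ) : (u ⬝ᵥ v)^2 ≤ (u ⬝ᵥ u) * (v ⬝ᵥ v) := by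
  simpa [dotProduct, pow_two] using Finset.sum_mul_sq_le_sq_mul_sq Finset.univ u v

lemma myAdj {n m : ℕ} (A : Matrix (Fin n) (Fin m) ℝ) (u : Fin m → ℝ) (v : Fin n → ℝ) :
    (A *ᵥ u) ⬝ᵥ v = u ⬝ᵥ (Aᵀ *ᵥ v) := by
  rw [dotProduct_comm, dotProduct_mulVec, dotProduct_comm, mulVec_transpose]

lemma mySqrtLe {a b : ℝ} (hb : 0 ≤ b) (h : a ≤ b^2) : Real.sqrt a ≤ b := by
  calc Real.sqrt a ≤ Real.sqrt (b^2) := Real.sqrt_le_sqrt h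
  _ = b := Real.sqrt_sq hb

lemma myAbsLe {t b : ℝ} (hb : 0 ≤ b) (h : t^2 ≤ b^2) : |t| ≤ b := by
  rw [← Real.sqrt_sq_eq_abs]; exact mySqrtLe hb h

lemma myVecMulVec {n : ℕ} (u v x : Fin n → ℝ) :
    vecMulVec u v *ᵥ x = (v ⬝ᵥ x) • u := by
  funext i
  simp only [vecMulVec, mulVec, dotProduct, of_apply, Pi.smul_apply, smul_eq_mul,
    Finset.sum_mul, Finset.mul_sum]
  exact Finset.sum_congr rfl fun j _ => by ring

set_option maxHeartbeats 2000000 in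
/-- Claim 4.11: decomposition of an approximately optimal regression
solution. There is a constant `D₀` such that for all `d ≥ D₀`: with `λ = d^{−40}`,
`ε = 1/100`, `x* = (1/√d)·Σ_j U⊥_{·,j}`, and `z` with `‖z‖₂ ≤ 1`, `‖z_U‖₂ ≥ 1/d⁴`, setting
`Δ = (10 − ⟨z_{U⊥}, x*⟩)/‖z_U‖₂` we have `Δ ∈ (9, 11d⁴]`, and every `x` with
`L(x) ≤ (1+ε)²λ(Δ²+1)` satisfies the three stated estimates (here `W = VVᵀ` for
`V = [U⊥, z_U/‖z_U‖₂]`, i.e. `W = U⊥U⊥ᵀ + z_U z_Uᵀ/‖z_U‖₂²`). -/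
theorem approx_solution_decomposition :
    ∃ D₀ : ℕ, ∀ d : ℕ, D₀ ≤ d → ∀ dOne : ℕ, 1 ≤ dOne → dOne ≤ d →
    ∀ (U : Matrix (Fin d) (Fin dOne) ℝ) (Up : Matrix (Fin d) (Fin (d - dOne)) ℝ),
      Uᵀ * U = 1 → Upᵀ * Up = 1 → Uᵀ * Up = 0 → U * Uᵀ + Up * Upᵀ = 1 →
    ∀ z : Fin d → ℝ, Real.sqrt (z ⬝ᵥ z) ≤ 1 →
    ∀ lam ε : ℝ, lam = 1 / (d : ℝ) ^ 40 → ε = 1 / 100 →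
    ∀ xstar : Fin d → ℝ, xstar = Up *ᵥ (fun _ => 1 / Real.sqrt (d : ℝ)) →
    ∀ zU zUp : Fin d → ℝ, zU = U *ᵥ (Uᵀ *ᵥ z) → zUp = Up *ᵥ (Upᵀ *ᵥ z) →
      1 / (d : ℝ) ^ 4 ≤ Real.sqrt (zU ⬝ᵥ zU) →
    ∀ Δ : ℝ, Δ = (10 - zUp ⬝ᵥ xstar) / Real.sqrt (zU ⬝ᵥ zU) →
    ∀ L : (Fin d → ℝ) → ℝ,
      (∀ x, L x = (Upᵀ *ᵥ x - (fun _ => 1 / Real.sqrt (d : ℝ)))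
                    ⬝ᵥ (Upᵀ *ᵥ x - (fun _ => 1 / Real.sqrt (d : ℝ)))
        + (1 / 100) * (z ⬝ᵥ x - 10) ^ 2 + lam * (x ⬝ᵥ x)) →
    ∀ W : Matrix (Fin d) (Fin d) ℝ,
      W = Up * Upᵀ + (zU ⬝ᵥ zU)⁻¹ • vecMulVec zU zU →
    (9 < Δ ∧ Δ ≤ 11 * (d : ℝ) ^ 4) ∧
    ∀ x : Fin d → ℝ, L x ≤ (1 + ε) ^ 2 * lam * (Δ ^ 2 + 1) →
      Real.sqrt ((Up *ᵥ (Upᵀ *ᵥ x) - xstar) ⬝ᵥ (Up *ᵥ (Upᵀ *ᵥ x) - xstar))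
          ≤ 20 * (d : ℝ) ^ 4 * Real.sqrt lam ∧
      |x ⬝ᵥ zU - (10 - zUp ⬝ᵥ xstar)| ≤ 200 * (d : ℝ) ^ 4 * Real.sqrt lam ∧
      Real.sqrt ((x - W *ᵥ x) ⬝ᵥ (x - W *ᵥ x)) ≤ 2 * Real.sqrt ε * Δ := by
  refine ⟨100, ?_⟩
  intro d hd dOne hdOne hdle U Up hUU hUpUp hUUp hfull z hz lam ε hlam hε xstar hxstar
    zU zUp hzU hzUp hzUlb Δ hΔ L hL W hW
  have hD : (100:ℝ) ≤ (d:ℝ) := by exact_mod_cast hd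
  have hD0 : (0:ℝ) < (d:ℝ) := by linarith
  have hd4 : (0:ℝ) < (d:ℝ)^4 := by positivity
  -- basic norms
  have hzz : z ⬝ᵥ z ≤ 1 := by
    nlinarith [Real.sq_sqrt (myDotSelfNonneg z), Real.sqrt_nonneg (z ⬝ᵥ z)]
  have hs0 : 0 ≤ zU ⬝ᵥ zU := myDotSelfNonneg zU
  have hσ0 : 0 < Real.sqrt (zU ⬝ᵥ zU) := lt_of_lt_of_le (by positivity) hzUlb
  have hspos : 0 < zU ⬝ᵥ zU := Real.sqrt_pos.mp hσ0
  -- matrix identities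
  have hUpU : Upᵀ * U = 0 := by
    have h := congrArg Matrix.transpose hUUp
    simpa using h
  have hUpzU : Upᵀ *ᵥ zU = 0 := by
    rw [hzU, mulVec_mulVec, hUpU, zero_mulVec]
  have hUzUp : Uᵀ *ᵥ zUp = 0 := by
    rw [hzUp, mulVec_mulVec, hUUp, zero_mulVec]
  have hUpret : ∀ v : Fin (d - dOne) → ℝ, Upᵀ *ᵥ (Up *ᵥ v) = v := fun v => by
    rw [mulVec_mulVec, hUpUp, one_mulVec]
  have hzsum : zU + zUp = z := by
    rw [hzU, hzUp, mulVec_mulVec, mulVec_mulVec, ← add_mulVec, hfull, one_mulVec]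
  have horth : zU ⬝ᵥ zUp = 0 := by
    rw [hzU, myAdj, hUzUp, dotProduct_zero]
  have hpyth : zU ⬝ᵥ zU + zUp ⬝ᵥ zUp = z ⬝ᵥ z := by
    have h : z ⬝ᵥ z = (zU + zUp) ⬝ᵥ (zU + zUp) := by rw [hzsum]
    rw [h, add_dotProduct, dotProduct_add, dotProduct_add, horth,
      dotProduct_comm zUp zU, horth]
    ring
  have hzU1 : zU ⬝ᵥ zU ≤ 1 := by nlinarith [myDotSelfNonneg zUp]
  have hzUp1 : zUp ⬝ᵥ zUp ≤ 1 := by nlinarith [hs0]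
  have hσ1 : Real.sqrt (zU ⬝ᵥ zU) ≤ 1 := mySqrtLe one_pos.le (by simpa using hzU1)
  -- xstar norm
  have hxx : xstar ⬝ᵥ xstar ≤ 1 - 1/(d:ℝ) := by
    have h1 : xstar ⬝ᵥ xstar
        = (fun _ : Fin (d - dOne) => 1 / Real.sqrt (d:ℝ)) ⬝ᵥ (fun _ => 1 / Real.sqrt (d:ℝ)) := by
      rw [hxstar, myAdj, hUpret]
    have h2 : (fun _ : Fin (d - dOne) => 1 / Real.sqrt (d:ℝ)) ⬝ᵥ (fun _ => 1 / Real.sqrt (d:ℝ))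
        = ((d - dOne : ℕ) : ℝ) * (1/(d:ℝ)) := by
      simp only [dotProduct, Finset.sum_const, Finset.card_univ, Fintype.card_fin,
        nsmul_eq_mul]
      rw [div_mul_div_comm, one_mul, Real.mul_self_sqrt hD0.le]
    have h3 : ((d - dOne : ℕ) : ℝ) ≤ (d:ℝ) - 1 := by
      rw [Nat.cast_sub hdle]
      have : (1:ℝ) ≤ (dOne:ℝ) := by exact_mod_cast hdOne
      linarith
    rw [h1, h2]
    have h4 : (0:ℝ) < 1/(d:ℝ) := by positivity
    calc ((d - dOne : ℕ) : ℝ) * (1/(d:ℝ)) ≤ ((d:ℝ) - 1) * (1/(d:ℝ)) := by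
          apply mul_le_mul_of_nonneg_right h3 h4.le
    _ = 1 - 1/(d:ℝ) := by field_simp
  have hxx0 : 0 ≤ xstar ⬝ᵥ xstar := myDotSelfNonneg xstar
  have hzxsq : (zUp ⬝ᵥ xstar)^2 ≤ 1 - 1/(d:ℝ) := by
    refine le_trans (myCS zUp xstar) ?_
    calc (zUp ⬝ᵥ zUp) * (xstar ⬝ᵥ xstar) ≤ 1 * (xstar ⬝ᵥ xstar) :=
          mul_le_mul_of_nonneg_right hzUp1 hxx0
    _ = xstar ⬝ᵥ xstar := one_mul _
    _ ≤ 1 - 1/(d:ℝ) := hxx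
  have hdinv : (0:ℝ) < 1/(d:ℝ) := by positivity
  have hAlb : 9 < 10 - zUp ⬝ᵥ xstar := by
    nlinarith [hzxsq, sq_nonneg (zUp ⬝ᵥ xstar - 1)]
  have hAub : 10 - zUp ⬝ᵥ xstar ≤ 11 := by
    nlinarith [hzxsq, sq_nonneg (zUp ⬝ᵥ xstar + 1)]
  have hΔlb : 9 < Δ := by
    rw [hΔ, lt_div_iff₀ hσ0]
    nlinarith [hσ1, hσ0]
  have hΔub : Δ ≤ 11 * (d:ℝ)^4 := by
    rw [hΔ, div_le_iff₀ hσ0]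
    have h5 : 11*(d:ℝ)^4 * (1/(d:ℝ)^4) = 11 := by field_simp
    nlinarith [hzUlb, hd4]
  refine ⟨⟨hΔlb, hΔub⟩, ?_⟩
  intro x hx
  -- sqrt values
  have hsl : Real.sqrt lam = 1/(d:ℝ)^20 := by
    rw [hlam, show (1:ℝ)/(d:ℝ)^40 = (1/(d:ℝ)^20)^2 by ring]
    exact Real.sqrt_sq (by positivity)
  have hse : Real.sqrt ε = 1/10 := by
    rw [hε, show (1:ℝ)/100 = ((1:ℝ)/10)^2 by norm_num]
    exact Real.sqrt_sq (by norm_num)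
  have hlam0 : 0 < lam := by rw [hlam]; positivity
  rw [hL x] at hx
  set w : Fin (d - dOne) → ℝ := Upᵀ *ᵥ x - (fun _ => 1 / Real.sqrt (d:ℝ)) with hwdef
  have hww0 : 0 ≤ w ⬝ᵥ w := myDotSelfNonneg w
  have hxx'0 : 0 ≤ x ⬝ᵥ x := myDotSelfNonneg x
  have h1 : w ⬝ᵥ w ≤ (1 + ε)^2 * lam * (Δ^2 + 1) := by
    linarith [sq_nonneg (z ⬝ᵥ x - 10), mul_nonneg hlam0.le hxx'0]
  have h2 : (z ⬝ᵥ x - 10)^2 ≤ 100 * ((1 + ε)^2 * lam * (Δ^2 + 1)) := by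
    linarith [hww0, mul_nonneg hlam0.le hxx'0]
  have h3 : lam * (x ⬝ᵥ x) ≤ (1 + ε)^2 * lam * (Δ^2 + 1) := by
    linarith [hww0, sq_nonneg (z ⬝ᵥ x - 10)]
  -- bound R
  have hΔsq : Δ^2 ≤ 121*(d:ℝ)^8 := by nlinarith [hΔlb, hΔub]
  have h8 : (1:ℝ) ≤ (d:ℝ)^8 := one_le_pow₀ (by linarith)
  have hRb : (1 + ε)^2 * lam * (Δ^2 + 1) ≤ 125/(d:ℝ)^32 := by
    rw [hε, hlam]
    rw [show (1 + 1/100:ℝ)^2 * (1/(d:ℝ)^40) * (Δ^2+1)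
        = ((101/100)^2*(Δ^2+1))/(d:ℝ)^40 by ring]
    rw [div_le_div_iff₀ (by positivity) (by positivity)]
    have h32 : (0:ℝ) < (d:ℝ)^32 := by positivity
    nlinarith [hΔsq, h8, h32, mul_le_mul_of_nonneg_right
      (show Δ^2 + 1 ≤ 122*(d:ℝ)^8 by nlinarith) h32.le]
  -- (a)
  have hveq : Up *ᵥ (Upᵀ *ᵥ x) - xstar = Up *ᵥ w := by
    rw [hwdef, mulVec_sub, hxstar]
  have hnorm : (Up *ᵥ w) ⬝ᵥ (Up *ᵥ w) = w ⬝ᵥ w := by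
    rw [myAdj, hUpret]
  have hwwb : w ⬝ᵥ w ≤ 125/(d:ℝ)^32 := le_trans h1 hRb
  have hp32 : ((d:ℝ)^16)^2 = (d:ℝ)^32 := by ring
  have goalA : Real.sqrt ((Up *ᵥ (Upᵀ *ᵥ x) - xstar) ⬝ᵥ (Up *ᵥ (Upᵀ *ᵥ x) - xstar))
      ≤ 20 * (d:ℝ)^4 * Real.sqrt lam := by
    rw [hveq, hnorm, hsl]
    apply mySqrtLe (by positivity)
    rw [show (20*(d:ℝ)^4*(1/(d:ℝ)^20))^2 = 400/(d:ℝ)^32 by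
      field_simp; ring]
    calc w ⬝ᵥ w ≤ 125/(d:ℝ)^32 := hwwb
    _ ≤ 400/(d:ℝ)^32 := by gcongr <;> norm_num
  -- (b)
  have hzUpx : zUp ⬝ᵥ (Up *ᵥ (Upᵀ *ᵥ x)) = zUp ⬝ᵥ x := by
    rw [dotProduct_comm zUp, myAdj]
    rw [show Upᵀ *ᵥ zUp = Upᵀ *ᵥ z by rw [hzUp, hUpret]]
    rw [dotProduct_comm zUp x, hzUp, myAdj, transpose_transpose]
  have hcross : zUp ⬝ᵥ x - zUp ⬝ᵥ xstar = zUp ⬝ᵥ (Up *ᵥ w) := by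
    rw [← hveq, dotProduct_sub, hzUpx]
  have hcross2 : (zUp ⬝ᵥ (Up *ᵥ w))^2 ≤ 125/(d:ℝ)^32 := by
    have hc := myCS zUp (Up *ᵥ w)
    rw [hnorm] at hc
    nlinarith only [hc, hzUp1, hwwb, hww0, myDotSelfNonneg zUp]
  have hdecomp : x ⬝ᵥ zU - (10 - zUp ⬝ᵥ xstar)
      = (z ⬝ᵥ x - 10) - (zUp ⬝ᵥ x - zUp ⬝ᵥ xstar) := by
    have hzx' : z ⬝ᵥ x = zU ⬝ᵥ x + zUp ⬝ᵥ x := by rw [← hzsum, add_dotProduct]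
    rw [dotProduct_comm x zU]
    linarith only [hzx']
  have e1 : |z ⬝ᵥ x - 10| ≤ 112/(d:ℝ)^16 := by
    apply myAbsLe (by positivity)
    rw [show (112/(d:ℝ)^16)^2 = 12544/(d:ℝ)^32 by rw [div_pow, hp32]; norm_num]
    calc (z ⬝ᵥ x - 10)^2 ≤ 100 * ((1 + ε)^2 * lam * (Δ^2 + 1)) := h2
    _ ≤ 100 * (125/(d:ℝ)^32) := by linarith only [hRb]
    _ ≤ 12544/(d:ℝ)^32 := by rw [show (100:ℝ) * (125/(d:ℝ)^32) = 12500/(d:ℝ)^32 by ring]; gcongr <;> norm_num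
  have e2 : |zUp ⬝ᵥ (Up *ᵥ w)| ≤ 12/(d:ℝ)^16 := by
    apply myAbsLe (by positivity)
    rw [show (12/(d:ℝ)^16)^2 = 144/(d:ℝ)^32 by rw [div_pow, hp32]; norm_num]
    calc (zUp ⬝ᵥ (Up *ᵥ w))^2 ≤ 125/(d:ℝ)^32 := hcross2
    _ ≤ 144/(d:ℝ)^32 := by gcongr <;> norm_num
  have e3 : |x ⬝ᵥ zU - (10 - zUp ⬝ᵥ xstar)| ≤ 124/(d:ℝ)^16 := by
    rw [hdecomp, hcross]
    calc |(z ⬝ᵥ x - 10) - zUp ⬝ᵥ (Up *ᵥ w)| ≤ |z ⬝ᵥ x - 10| + |zUp ⬝ᵥ (Up *ᵥ w)| :=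
      abs_sub _ _
    _ ≤ 112/(d:ℝ)^16 + 12/(d:ℝ)^16 := add_le_add e1 e2
    _ = 124/(d:ℝ)^16 := by ring
  have goalB : |x ⬝ᵥ zU - (10 - zUp ⬝ᵥ xstar)| ≤ 200 * (d:ℝ)^4 * Real.sqrt lam := by
    rw [hsl, show 200*(d:ℝ)^4*(1/(d:ℝ)^20) = 200/(d:ℝ)^16 by field_simp]
    calc |x ⬝ᵥ zU - (10 - zUp ⬝ᵥ xstar)| ≤ 124/(d:ℝ)^16 := e3
    _ ≤ 200/(d:ℝ)^16 := by gcongr <;> norm_num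
  -- (c)
  have hwv : W *ᵥ x = Up *ᵥ (Upᵀ *ᵥ x) + ((zU ⬝ᵥ zU)⁻¹ * (zU ⬝ᵥ x)) • zU := by
    rw [hW, add_mulVec, ← mulVec_mulVec, smul_mulVec, myVecMulVec, smul_smul]
  have hp_x : (Up *ᵥ (Upᵀ *ᵥ x)) ⬝ᵥ x = (Upᵀ *ᵥ x) ⬝ᵥ (Upᵀ *ᵥ x) := myAdj _ _ _
  have hx_p : x ⬝ᵥ (Up *ᵥ (Upᵀ *ᵥ x)) = (Upᵀ *ᵥ x) ⬝ᵥ (Upᵀ *ᵥ x) := by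
    rw [dotProduct_comm]; exact hp_x
  have hp_p : (Up *ᵥ (Upᵀ *ᵥ x)) ⬝ᵥ (Up *ᵥ (Upᵀ *ᵥ x)) = (Upᵀ *ᵥ x) ⬝ᵥ (Upᵀ *ᵥ x) := by
    rw [myAdj, hUpret]
  have hp_z : (Up *ᵥ (Upᵀ *ᵥ x)) ⬝ᵥ zU = 0 := by
    rw [myAdj, hUpzU, dotProduct_zero]
  have hz_p : zU ⬝ᵥ (Up *ᵥ (Upᵀ *ᵥ x)) = 0 := by
    rw [dotProduct_comm]; exact hp_z
  have hyy : (x - W *ᵥ x) ⬝ᵥ (x - W *ᵥ x)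
      = x ⬝ᵥ x - (Upᵀ *ᵥ x) ⬝ᵥ (Upᵀ *ᵥ x) - (zU ⬝ᵥ x)^2/(zU ⬝ᵥ zU) := by
    rw [hwv]
    simp only [sub_dotProduct, dotProduct_sub, add_dotProduct, dotProduct_add,
      smul_dotProduct, dotProduct_smul, smul_eq_mul]
    rw [hx_p, hp_p, hp_z, hz_p, dotProduct_comm x zU]
    field_simp
    rw [hp_x]
    ring
  -- bounds for (c)
  have hxxb : x ⬝ᵥ x ≤ (1+ε)^2*(Δ^2+1) := by
    have h3' : lam * (x ⬝ᵥ x) ≤ lam * ((1+ε)^2*(Δ^2+1)) := by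
      linarith only [h3, show (1+ε)^2*lam*(Δ^2+1) = lam*((1+ε)^2*(Δ^2+1)) from by ring]
    exact le_of_mul_le_mul_left h3' hlam0
  have hA : 10 - zUp ⬝ᵥ xstar = Δ * Real.sqrt (zU ⬝ᵥ zU) := by
    rw [hΔ]; field_simp
  have hτσ : 124/(d:ℝ)^16 ≤ (124/(d:ℝ)^12) * Real.sqrt (zU ⬝ᵥ zU) := by
    calc (124:ℝ)/(d:ℝ)^16 = (124/(d:ℝ)^12) * (1/(d:ℝ)^4) := by
          field_simp
    _ ≤ (124/(d:ℝ)^12) * Real.sqrt (zU ⬝ᵥ zU) := by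
          apply mul_le_mul_of_nonneg_left hzUlb (by positivity)
  have ha_lb : (Δ - 124/(d:ℝ)^12) * Real.sqrt (zU ⬝ᵥ zU) ≤ zU ⬝ᵥ x := by
    have h1' : -(124/(d:ℝ)^16) ≤ x ⬝ᵥ zU - (10 - zUp ⬝ᵥ xstar) := (abs_le.mp e3).1
    rw [dotProduct_comm zU x]
    nlinarith only [h1', hτσ, hA]
  have hd12 : (124:ℝ) ≤ (d:ℝ)^12 := by
    calc (124:ℝ) ≤ 100^12 := by norm_num
    _ ≤ (d:ℝ)^12 := pow_le_pow_left₀ (by norm_num) hD 12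
  have hτ0 : (0:ℝ) ≤ Δ - 124/(d:ℝ)^12 := by
    have : 124/(d:ℝ)^12 ≤ 1 := by
      rw [div_le_one (by positivity)]; exact hd12
    linarith only [this, hΔlb]
  have hsq_lb : (Δ - 124/(d:ℝ)^12)^2 * (zU ⬝ᵥ zU) ≤ (zU ⬝ᵥ x)^2 := by
    nlinarith only [ha_lb, hτ0, Real.sq_sqrt hs0, Real.sqrt_nonneg (zU ⬝ᵥ zU),
      mul_nonneg hτ0 (Real.sqrt_nonneg (zU ⬝ᵥ zU)),
      mul_self_le_mul_self (mul_nonneg hτ0 (Real.sqrt_nonneg (zU ⬝ᵥ zU))) ha_lb]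
  have hfrac : (Δ - 124/(d:ℝ)^12)^2 ≤ (zU ⬝ᵥ x)^2/(zU ⬝ᵥ zU) := by
    rw [le_div_iff₀ hspos]; exact hsq_lb
  have hΔτ : Δ * (124/(d:ℝ)^12) ≤ 1/100 := by
    have ha : Δ * (124/(d:ℝ)^12) ≤ 11*(d:ℝ)^4 * (124/(d:ℝ)^12) :=
      mul_le_mul_of_nonneg_right hΔub (by positivity)
    have hb : 11*(d:ℝ)^4 * (124/(d:ℝ)^12) = 1364/(d:ℝ)^8 := by field_simp; ring
    have hc : 1364/(d:ℝ)^8 ≤ 1/100 := by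
      rw [div_le_div_iff₀ (by positivity) (by norm_num)]
      calc (1364:ℝ)*100 = 136400 := by norm_num
      _ ≤ 100^8 := by norm_num
      _ ≤ (d:ℝ)^8 := pow_le_pow_left₀ (by norm_num) hD 8
      _ = 1*(d:ℝ)^8 := (one_mul _).symm
    linarith only [hb ▸ ha, hc]
  have goalC : Real.sqrt ((x - W *ᵥ x) ⬝ᵥ (x - W *ᵥ x)) ≤ 2 * Real.sqrt ε * Δ := by
    apply mySqrtLe (by rw [hse]; linarith)
    rw [hyy, hse]
    nlinarith only [hfrac, hε ▸ hxxb, hΔτ, hΔlb, myDotSelfNonneg (Upᵀ *ᵥ x),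
      sq_nonneg (124/(d:ℝ)^12), sq_nonneg (Δ - 9)]
  exact ⟨goalA, goalB, goalC⟩
end

section
/- There exist constants C and D₀ such that the following holds for all d ≥ D₀. Let d₁ ∈ [d], let U ∈ ℝ^{d×d₁} and U⊥ ∈ ℝ^{d×(d−d₁)} have orthonormal columns with [U, U⊥] orthogonal. Let λ = d^{−40}, ε = 1/100, x* = (1/√d)·Σ_{j=1}^{d−d₁} U⊥_{·,j}, and let z ∈ ℝ^d with ‖z‖₂ ≤ 1. Define L(x) = ‖U⊥ᵀ x − (1/√d)·1_{d−d₁}‖₂² + (1/100)·(⟨z, x⟩ − 10)² + λ‖x‖₂². Let x' ∈ ℝ^d be any ε-approximate minimizer, i.e., √(L(x')) ≤ (1+ε)·min_{x ∈ ℝ^d} √(L(x)). Set y = x' − x* and define ẑ ∈ ℝ^d as follows: if ‖y‖₂ ≥ d³ or |10 − ⟨z, x'⟩| ≥ 200 d⁴ √λ, set ẑ = 0; otherwise set ẑ = ξ*·y, where ξ* ∈ ℝ minimizes ξ ↦ ‖z − ξ·y‖₂ (explicitly ξ* = ⟨z, y⟩/‖y‖₂² if y ≠ 0, and ξ* = 0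 if y = 0). Then ‖ẑ − UUᵀz‖₂ ≤ (1/3)·‖UUᵀz‖₂ + C/d³. -/
open Matrix
section
variable {n : ℕ}

lemma dotSelfNN (x : Fin n → ℝ) : 0 ≤ x ⬝ᵥ x :=
  Finset.sum_nonneg fun _ _ => mul_self_nonneg _

lemma csSq (x y : Fin n → ℝ) : (x ⬝ᵥ y)^2 ≤ (x ⬝ᵥ x) * (y ⬝ᵥ y) := by
  have := Finset.sum_mul_sq_le_sq_mul_sq Finset.univ x y
  simpa [dotProduct, pow_two] using this

lemma sqrtLe {x a : ℝ} (ha : 0 ≤ a) (h : x ≤ a^2) : Real.sqrt x ≤ a := by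
  calc Real.sqrt x ≤ Real.sqrt (a^2) := Real.sqrt_le_sqrt h
  _ = a := Real.sqrt_sq ha

lemma csAbs (x y : Fin n → ℝ) : |x ⬝ᵥ y| ≤ Real.sqrt (x ⬝ᵥ x) * Real.sqrt (y ⬝ᵥ y) := by
  rw [← Real.sqrt_sq_eq_abs, ← Real.sqrt_mul (dotSelfNN x)]
  exact Real.sqrt_le_sqrt (csSq x y)

lemma triIneq (x y : Fin n → ℝ) :
    Real.sqrt ((x + y) ⬝ᵥ (x + y)) ≤ Real.sqrt (x ⬝ᵥ x) + Real.sqrt (y ⬝ᵥ y) := by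
  have hx := dotSelfNN x
  have hy := dotSelfNN y
  have hcs := (le_abs_self _).trans (csAbs x y)
  have h1 : (x + y) ⬝ᵥ (x + y) = x ⬝ᵥ x + 2 * (x ⬝ᵥ y) + y ⬝ᵥ y := by
    simp [add_dotProduct, dotProduct_add, dotProduct_comm x y]; ring
  refine sqrtLe (by positivity) ?_
  have h2 : x ⬝ᵥ x = (Real.sqrt (x ⬝ᵥ x))^2 := (Real.sq_sqrt hx).symm
  have h3 : y ⬝ᵥ y = (Real.sqrt (y ⬝ᵥ y))^2 := (Real.sq_sqrt hy).symm
  nlinarith [Real.sqrt_nonneg (x ⬝ᵥ x), Real.sqrt_nonneg (y ⬝ᵥ y)]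

lemma dotMulVecLeft {m : ℕ} (A : Matrix (Fin n) (Fin m) ℝ) (u : Fin m → ℝ) (w : Fin n → ℝ) :
    (A *ᵥ u) ⬝ᵥ w = u ⬝ᵥ (Aᵀ *ᵥ w) := by
  rw [dotProduct_comm, Matrix.dotProduct_mulVec, dotProduct_comm]
  congr 1
  rw [← Matrix.vecMul_transpose, Matrix.transpose_transpose]
end

set_option maxHeartbeats 16000000 in
/-- Lemma 4.12: a `1/100`-approximate solution of the regression instance
yields a `(1/3, O(1/d³))`-approximate projection of `z` onto `U`. There are constants `C`
and `D₀` such that for all `d ≥ D₀`: with `λ = d^{−40}`, `ε = 1/100`,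
`x* = (1/√d)·Σ_j U⊥_{·,j}`, any `ε`-approximate minimizer `x'` of `√L`, and `ẑ` computed by
the thresholding/line-search rule (with `y = x' − x*` and `ξ* = ⟨z,y⟩/‖y‖₂²`, where `ẑ = 0`
if `‖y‖₂ ≥ d³` or `|10 − ⟨z,x'⟩| ≥ 200d⁴√λ`, and `ẑ = ξ*·y` otherwise), one has
`‖ẑ − UUᵀz‖₂ ≤ (1/3)‖UUᵀz‖₂ + C/d³`. -/
theorem approx_regression_gives_approx_projection :
    ∃ (C : ℝ) (D₀ : ℕ), ∀ d : ℕ, D₀ ≤ d → ∀ dOne : ℕ, 1 ≤ dOne → dOne ≤ d →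
    ∀ (U : Matrix (Fin d) (Fin dOne) ℝ) (Up : Matrix (Fin d) (Fin (d - dOne)) ℝ),
      Uᵀ * U = 1 → Upᵀ * Up = 1 → Uᵀ * Up = 0 → U * Uᵀ + Up * Upᵀ = 1 →
    ∀ z : Fin d → ℝ, Real.sqrt (z ⬝ᵥ z) ≤ 1 →
    ∀ lam ε : ℝ, lam = 1 / (d : ℝ) ^ 40 → ε = 1 / 100 →
    ∀ xstar : Fin d → ℝ, xstar = Up *ᵥ (fun _ => 1 / Real.sqrt (d : ℝ)) →
    ∀ L : (Fin d → ℝ) → ℝ,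
      (∀ x, L x = (Upᵀ *ᵥ x - (fun _ => 1 / Real.sqrt (d : ℝ)))
                    ⬝ᵥ (Upᵀ *ᵥ x - (fun _ => 1 / Real.sqrt (d : ℝ)))
        + (1 / 100) * (z ⬝ᵥ x - 10) ^ 2 + lam * (x ⬝ᵥ x)) →
    ∀ x' : Fin d → ℝ, (∀ x, Real.sqrt (L x') ≤ (1 + ε) * Real.sqrt (L x)) →
    ∀ yv : Fin d → ℝ, yv = x' - xstar →
    ∀ zU : Fin d → ℝ, zU = U *ᵥ (Uᵀ *ᵥ z) →
    (((d : ℝ) ^ 3 ≤ Real.sqrt (yv ⬝ᵥ yv) ∨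
        200 * (d : ℝ) ^ 4 * Real.sqrt lam ≤ |10 - z ⬝ᵥ x'|) →
      Real.sqrt (((0 : Fin d → ℝ) - zU) ⬝ᵥ ((0 : Fin d → ℝ) - zU)) ≤
        (1 / 3) * Real.sqrt (zU ⬝ᵥ zU) + C / (d : ℝ) ^ 3) ∧
    (¬ ((d : ℝ) ^ 3 ≤ Real.sqrt (yv ⬝ᵥ yv) ∨
        200 * (d : ℝ) ^ 4 * Real.sqrt lam ≤ |10 - z ⬝ᵥ x'|) →
      Real.sqrt ((((z ⬝ᵥ yv) / (yv ⬝ᵥ yv)) • yv - zU) ⬝ᵥ (((z ⬝ᵥ yv) / (yv ⬝ᵥ yv)) • yv - zU))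
        ≤ (1 / 3) * Real.sqrt (zU ⬝ᵥ zU) + C / (d : ℝ) ^ 3) := by
  refine ⟨67, 1000, ?_⟩
  intro d hd dOne hd1 hdd U Up hU hUp hUUp hI z hz lam ε hlam hε xstar hxs L hL x' happrox
    yv hyv zU hzU
  set v : Fin (d - dOne) → ℝ := (fun _ => 1 / Real.sqrt (d : ℝ)) with hv
  have hdR : (1000 : ℝ) ≤ (d : ℝ) := by exact_mod_cast hd
  have hd0 : (0 : ℝ) < (d : ℝ) := by linarith
  have hlam0 : 0 < lam := by rw [hlam]; positivity
  -- basic mulVec facts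
  have hUtU : ∀ b : Fin dOne → ℝ, Uᵀ *ᵥ (U *ᵥ b) = b := by
    intro b; rw [Matrix.mulVec_mulVec, hU, Matrix.one_mulVec]
  have hUptUp : ∀ a : Fin (d - dOne) → ℝ, Upᵀ *ᵥ (Up *ᵥ a) = a := by
    intro a; rw [Matrix.mulVec_mulVec, hUp, Matrix.one_mulVec]
  have hUptU0 : Upᵀ * U = 0 := by
    have := congrArg Matrix.transpose hUUp
    rwa [Matrix.transpose_mul, Matrix.transpose_transpose, Matrix.transpose_zero] at this
  have hUptU : ∀ b : Fin dOne → ℝ, Upᵀ *ᵥ (U *ᵥ b) = 0 := by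
    intro b; rw [Matrix.mulVec_mulVec, hUptU0, Matrix.zero_mulVec]
  have hUtUp : ∀ a : Fin (d - dOne) → ℝ, Uᵀ *ᵥ (Up *ᵥ a) = 0 := by
    intro a; rw [Matrix.mulVec_mulVec, hUUp, Matrix.zero_mulVec]
  have hdec : ∀ x : Fin d → ℝ, U *ᵥ (Uᵀ *ᵥ x) + Up *ᵥ (Upᵀ *ᵥ x) = x := by
    intro x
    have := congrArg (fun M => M *ᵥ x) hI
    simpa [Matrix.add_mulVec, Matrix.one_mulVec, Matrix.mulVec_mulVec] using this
  -- dot products of images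
  have dUU : ∀ a b : Fin dOne → ℝ, (U *ᵥ a) ⬝ᵥ (U *ᵥ b) = a ⬝ᵥ b := by
    intro a b; rw [dotMulVecLeft, hUtU]
  have dUpUp : ∀ a b : Fin (d - dOne) → ℝ, (Up *ᵥ a) ⬝ᵥ (Up *ᵥ b) = a ⬝ᵥ b := by
    intro a b; rw [dotMulVecLeft, hUptUp]
  have dUUp : ∀ (b : Fin dOne → ℝ) (a : Fin (d - dOne) → ℝ),
      (U *ᵥ b) ⬝ᵥ (Up *ᵥ a) = 0 := by
    intro b a
    rw [dotProduct_comm, dotMulVecLeft, hUptU, dotProduct_zero]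
  set p : Fin (d - dOne) → ℝ := Upᵀ *ᵥ z with hp
  set q : Fin dOne → ℝ := Uᵀ *ᵥ z with hq
  have zdotU : ∀ b : Fin dOne → ℝ, z ⬝ᵥ (U *ᵥ b) = q ⬝ᵥ b := by
    intro b
    rw [dotProduct_comm, dotMulVecLeft, dotProduct_comm]
  have zdotUp : ∀ a : Fin (d - dOne) → ℝ, z ⬝ᵥ (Up *ᵥ a) = p ⬝ᵥ a := by
    intro a
    rw [dotProduct_comm, dotMulVecLeft, dotProduct_comm]
  have hzz : z ⬝ᵥ z ≤ 1 := by
    have h := Real.sq_sqrt (dotSelfNN z)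
    nlinarith [Real.sqrt_nonneg (z ⬝ᵥ z)]
  have hsplit : p ⬝ᵥ p + q ⬝ᵥ q = z ⬝ᵥ z := by
    have h := congrArg (fun w => z ⬝ᵥ w) (hdec z)
    simp only [dotProduct_add] at h
    rw [zdotU, zdotUp] at h
    rw [dotProduct_comm p (Upᵀ *ᵥ z)] at h ⊢
    rw [dotProduct_comm q (Uᵀ *ᵥ z)] at h ⊢
    linarith [h]
  have hqq1 : q ⬝ᵥ q ≤ 1 := by have := dotSelfNN p; linarith
  have hpp1 : p ⬝ᵥ p ≤ 1 := by have := dotSelfNN q; linarith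
  have hzUq : zU ⬝ᵥ zU = q ⬝ᵥ q := by rw [hzU, dUU]
  have hvv : v ⬝ᵥ v ≤ 1 := by
    have hss : (1 / Real.sqrt (d:ℝ)) * (1 / Real.sqrt (d:ℝ)) = 1 / (d:ℝ) := by
      rw [div_mul_div_comm, one_mul, Real.mul_self_sqrt hd0.le]
    have hvval : v ⬝ᵥ v = ((d - dOne : ℕ) : ℝ) * (1 / (d:ℝ)) := by
      calc v ⬝ᵥ v = ∑ _i : Fin (d - dOne), (1 / (d:ℝ)) :=
            Finset.sum_congr rfl (fun i _ => hss)
      _ = ((d - dOne : ℕ) : ℝ) * (1 / (d:ℝ)) := by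
            rw [Finset.sum_const, Finset.card_univ, Fintype.card_fin, nsmul_eq_mul]
    rw [hvval]
    have hle : ((d - dOne : ℕ) : ℝ) ≤ (d : ℝ) := by exact_mod_cast Nat.sub_le d dOne
    have h2 : ((d - dOne : ℕ) : ℝ) * (1 / (d:ℝ)) ≤ (d : ℝ) * (1 / (d:ℝ)) :=
      mul_le_mul_of_nonneg_right hle (by positivity)
    have h3 : (d : ℝ) * (1 / (d:ℝ)) = 1 := by field_simp
    linarith
  have hvvNN : 0 ≤ v ⬝ᵥ v := dotSelfNN v
  have hpvNN : 0 ≤ p ⬝ᵥ p := dotSelfNN p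
  have hpv : |p ⬝ᵥ v| ≤ 1 := by
    have := csAbs p v
    have h1 : Real.sqrt (p ⬝ᵥ p) ≤ 1 := sqrtLe one_pos.le (by linarith)
    have h2 : Real.sqrt (v ⬝ᵥ v) ≤ 1 := sqrtLe one_pos.le (by linarith)
    nlinarith [Real.sqrt_nonneg (p ⬝ᵥ p), Real.sqrt_nonneg (v ⬝ᵥ v)]
  -- facts about xstar
  have hxsUp : Upᵀ *ᵥ xstar = v := by rw [hxs, hUptUp]
  have hxsU : Uᵀ *ᵥ xstar = 0 := by rw [hxs, hUtUp]
  have hxsdot : xstar ⬝ᵥ xstar = v ⬝ᵥ v := by rw [hxs, dUpUp]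
  have hzxs : z ⬝ᵥ xstar = p ⬝ᵥ v := by rw [hxs, zdotUp]
  -- L nonneg and quadratic comparison
  have hLnn : ∀ x, 0 ≤ L x := by
    intro x; rw [hL]
    have := dotSelfNN ((Upᵀ *ᵥ x) - v)
    have := dotSelfNN x
    positivity
  have hLcmp : ∀ x, L x' ≤ (10201/10000) * L x := by
    intro x
    have h := happrox x
    rw [hε] at h
    have h1 := hLnn x'
    have h2 := hLnn x
    have s1 : Real.sqrt (L x') ^ 2 = L x' := Real.sq_sqrt h1
    have s2 : Real.sqrt (L x) ^ 2 = L x := Real.sq_sqrt h2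
    nlinarith [Real.sqrt_nonneg (L x'), Real.sqrt_nonneg (L x)]
  -- term bounds from L
  have hLterm1 : ∀ x, ((Upᵀ *ᵥ x) - v) ⬝ᵥ ((Upᵀ *ᵥ x) - v) ≤ L x := by
    intro x; rw [hL]
    have := dotSelfNN x
    nlinarith [sq_nonneg (z ⬝ᵥ x - 10)]
  have hLterm2 : ∀ x, (1/100) * (z ⬝ᵥ x - 10)^2 ≤ L x := by
    intro x; rw [hL]
    have := dotSelfNN x
    have := dotSelfNN ((Upᵀ *ᵥ x) - v)
    nlinarith
  have hLterm3 : ∀ x, lam * (x ⬝ᵥ x) ≤ L x := by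
    intro x; rw [hL]
    have := dotSelfNN ((Upᵀ *ᵥ x) - v)
    nlinarith [sq_nonneg (z ⬝ᵥ x - 10)]
  -- the comparison point bound
  have hcomp : 0 < q ⬝ᵥ q → L x' * (q ⬝ᵥ q) ≤ 125 * lam := by
    intro hQ
    set c : ℝ := (10 - p ⬝ᵥ v) / (q ⬝ᵥ q) with hc
    set xc : Fin d → ℝ := xstar + c • (U *ᵥ q) with hxc
    have h1 : Upᵀ *ᵥ xc = v := by
      rw [hxc, Matrix.mulVec_add, Matrix.mulVec_smul, hUptU, hxsUp]
      simp
    have h2 : z ⬝ᵥ xc = 10 := by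
      rw [hxc, dotProduct_add, dotProduct_smul, zdotU, hzxs, hc]
      rw [smul_eq_mul, div_mul_cancel₀ _ hQ.ne']; ring
    have hcross : xstar ⬝ᵥ (U *ᵥ q) = 0 := by
      rw [hxs, dotProduct_comm, dUUp]
    have h3 : xc ⬝ᵥ xc = v ⬝ᵥ v + c^2 * (q ⬝ᵥ q) := by
      rw [hxc]
      simp only [dotProduct_add, add_dotProduct, dotProduct_smul,
        smul_dotProduct, hxsdot, dUU, hcross, dotProduct_comm (c • (U *ᵥ q)) xstar]
      simp only [smul_eq_mul, smul_zero, mul_zero, zero_add, add_zero]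
      ring
    have hLxc : L xc = lam * (v ⬝ᵥ v + c^2 * (q ⬝ᵥ q)) := by
      rw [hL, h1, h2, h3]
      simp
    have hm : (10 - p ⬝ᵥ v)^2 ≤ 121 := by
      have := abs_le.mp hpv
      nlinarith
    have hc2 : c^2 * (q ⬝ᵥ q) * (q ⬝ᵥ q) = (10 - p ⬝ᵥ v)^2 := by
      rw [hc]; field_simp
    have hLxcQ : L xc * (q ⬝ᵥ q) ≤ 122 * lam := by
      rw [hLxc]
      have hvvQ : (v ⬝ᵥ v) * (q ⬝ᵥ q) ≤ 1 := by nlinarith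
      nlinarith [hc2, hm, hlam0]
    have := hLcmp xc
    have hLnnxc := hLnn xc
    nlinarith [hQ]
  have hd3 : (0:ℝ) < (d:ℝ)^3 := by positivity
  have hd3big : (10:ℝ)^9 ≤ (d:ℝ)^3 := by
    calc (10:ℝ)^9 = 1000^3 := by norm_num
    _ ≤ (d:ℝ)^3 := pow_le_pow_left₀ (by norm_num) hdR 3
  constructor
  · intro hcase
    have h0 : ((0 : Fin d → ℝ) - zU) ⬝ᵥ ((0 : Fin d → ℝ) - zU) = zU ⬝ᵥ zU := by
      simp
    have hsmall : Real.sqrt (q ⬝ᵥ q) < 100 / (d:ℝ)^3 := by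
      by_contra hge
      push_neg at hge
      have hQnn := dotSelfNN q
      have hsq := Real.sq_sqrt hQnn
      have hQpos : 0 < q ⬝ᵥ q := by
        have h1 : 0 < Real.sqrt (q ⬝ᵥ q) := lt_of_lt_of_le (by positivity) hge
        nlinarith
      have hQlb : 10000 ≤ (q ⬝ᵥ q) * (d:ℝ)^6 := by
        have h1 : (100/(d:ℝ)^3)^2 ≤ q ⬝ᵥ q := by
          have h := pow_le_pow_left₀ (by positivity : (0:ℝ) ≤ 100/(d:ℝ)^3) hge 2
          rwa [hsq] at h
        have h2 : (100/(d:ℝ)^3)^2 * (d:ℝ)^6 = 10000 := by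
          field_simp; ring
        nlinarith [pow_pos hd0 6]
      have hLx' := hcomp hQpos
      -- bound on x'
      have hx'Q : (x' ⬝ᵥ x') * (q ⬝ᵥ q) ≤ 125 := by
        have h1 := hLterm3 x'
        have h2 : lam * (x' ⬝ᵥ x') * (q ⬝ᵥ q) ≤ 125 * lam :=
          le_trans (mul_le_mul_of_nonneg_right h1 hQpos.le) hLx'
        have h3 : lam * ((x' ⬝ᵥ x') * (q ⬝ᵥ q)) ≤ lam * 125 := by linarith [h2]
        have := (mul_le_mul_iff_right₀ hlam0).mp h3
        linarith
      have hx'2 : x' ⬝ᵥ x' ≤ (144/10000) * (d:ℝ)^6 := by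
        have hxnn := dotSelfNN x'
        have hd6 : (0:ℝ) < (d:ℝ)^6 := by positivity
        nlinarith [mul_le_mul_of_nonneg_left hQlb hxnn]
      have hnx : Real.sqrt (x' ⬝ᵥ x') ≤ (12/100) * (d:ℝ)^3 := by
        refine sqrtLe (by positivity) ?_
        have : ((12/100) * (d:ℝ)^3)^2 = (144/10000) * (d:ℝ)^6 := by ring
        linarith [hx'2, this.ge]
      have hnxs : Real.sqrt (xstar ⬝ᵥ xstar) ≤ 1 := by
        refine sqrtLe one_pos.le ?_
        rw [hxsdot]; linarith
      have hyb : Real.sqrt (yv ⬝ᵥ yv) < (d:ℝ)^3 := by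
        have hx'eq : yv = x' + (-xstar) := by rw [hyv]; funext i; simp [sub_eq_add_neg]
        have ht := triIneq x' (-xstar)
        have hneg : (-xstar) ⬝ᵥ (-xstar) = xstar ⬝ᵥ xstar := by simp
        rw [← hx'eq, hneg] at ht
        have : (1:ℝ) < (88/100) * (d:ℝ)^3 := by nlinarith
        linarith
      have hzxb : |10 - z ⬝ᵥ x'| < 200 * (d:ℝ)^4 * Real.sqrt lam := by
        have h2 := hLterm2 x'
        have hLQ : (1/100) * (z ⬝ᵥ x' - 10)^2 * (q ⬝ᵥ q) ≤ 125 * lam :=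
          le_trans (mul_le_mul_of_nonneg_right h2 hQpos.le) hLx'
        have hsqb : (z ⬝ᵥ x' - 10)^2 ≤ (125/100) * lam * (d:ℝ)^6 := by
          have hd6 : (0:ℝ) < (d:ℝ)^6 := by positivity
          nlinarith [mul_le_mul_of_nonneg_left hQlb (sq_nonneg (z ⬝ᵥ x' - 10)),
            mul_le_mul_of_nonneg_right hLQ hd6.le]
        have hrhs : (200 * (d:ℝ)^4 * Real.sqrt lam)^2 = 40000 * (d:ℝ)^8 * lam := by
          rw [mul_pow, mul_pow, Real.sq_sqrt hlam0.le]; ring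
        refine lt_of_pow_lt_pow_left₀ 2 (by positivity) ?_
        rw [hrhs]
        have habs : |10 - z ⬝ᵥ x'|^2 = (z ⬝ᵥ x' - 10)^2 := by
          rw [sq_abs]; ring
        rw [habs]
        have hd68 : (d:ℝ)^6 ≤ (d:ℝ)^8 := by
          gcongr
          · linarith
          · norm_num
        nlinarith [mul_le_mul_of_nonneg_right hd68 hlam0.le]
      rcases hcase with h | h
      · exact absurd h (not_le.mpr hyb)
      · exact absurd h (not_le.mpr hzxb)
    rw [h0, hzUq]
    have hnn := Real.sqrt_nonneg (q ⬝ᵥ q)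
    have h1 : (2:ℝ)/3 * Real.sqrt (q ⬝ᵥ q) ≤ (2/3) * (100/(d:ℝ)^3) :=
      mul_le_mul_of_nonneg_left hsmall.le (by norm_num)
    have h2 : (2:ℝ)/3 * (100/(d:ℝ)^3) ≤ 67 / (d:ℝ)^3 := by
      rw [show (2:ℝ)/3 * (100/(d:ℝ)^3) = (200/3)/(d:ℝ)^3 by ring]
      gcongr
      norm_num
    linarith
  · intro hncase
    push_neg at hncase
    obtain ⟨hyb, hzxb⟩ := hncase
    have hd1R : (1:ℝ) ≤ (d:ℝ) := by linarith
    have hd3one : (1:ℝ) ≤ (d:ℝ)^3 := by linarith [hd3big]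
    -- the residual |10 - z·x'| is at most 1
    have hsqlam : Real.sqrt lam = 1 / (d:ℝ)^20 := by
      rw [hlam, show (1:ℝ)/(d:ℝ)^40 = (1/(d:ℝ)^20)^2 by ring]
      exact Real.sqrt_sq (by positivity)
    have h200d3 : (200:ℝ) ≤ (d:ℝ)^3 := by linarith [hd3big]
    have hzx10 : |10 - z ⬝ᵥ x'| ≤ 1 := by
      have h1 : 200*(d:ℝ)^4*Real.sqrt lam ≤ 1 := by
        rw [hsqlam, mul_one_div, div_le_one (by positivity)]
        calc 200*(d:ℝ)^4 ≤ (d:ℝ)^3 * (d:ℝ)^4 :=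
              mul_le_mul_of_nonneg_right h200d3 (by positivity)
        _ = (d:ℝ)^7 := by ring
        _ ≤ (d:ℝ)^20 := pow_le_pow_right₀ hd1R (by norm_num)
      linarith [hzxb.le]
    have hzx'9 : 9 ≤ z ⬝ᵥ x' := by
      have := abs_le.mp hzx10
      linarith
    -- crude bound on L x'
    have hlam1 : lam ≤ 1/1000 := by
      rw [hlam, div_le_div_iff₀ (by positivity) (by norm_num)]
      have h1 : (d:ℝ) ≤ (d:ℝ)^40 := le_self_pow₀ hd1R (by norm_num)
      linarith
    have hLxsb : L xstar ≤ 13/10 := by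
      rw [hL, hxsUp, hzxs, hxsdot]
      simp only [sub_self, zero_dotProduct]
      have habs := abs_le.mp hpv
      have hsq : (p ⬝ᵥ v - 10)^2 ≤ 121 := by nlinarith only [habs.1, habs.2]
      have hlv : lam * (v ⬝ᵥ v) ≤ (1/1000) * 1 :=
        mul_le_mul hlam1 hvv hvvNN (by norm_num)
      linarith only [hsq, hlv]
    have hLx'13 : L x' ≤ 3/2 := by
      have := hLcmp xstar
      linarith
    -- components of x'
    have hterm1x := hLterm1 x'
    have hE1c : ((Upᵀ *ᵥ x') - v) ⬝ᵥ ((Upᵀ *ᵥ x') - v) ≤ 3/2 := le_trans hterm1x hLx'13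
    have hpsplit : p ⬝ᵥ (Upᵀ *ᵥ x') = p ⬝ᵥ v + p ⬝ᵥ ((Upᵀ *ᵥ x') - v) := by
      rw [dotProduct_sub]; ring
    have hpa : |p ⬝ᵥ (Upᵀ *ᵥ x')| ≤ 23/10 := by
      have hcs := csAbs p ((Upᵀ *ᵥ x') - v)
      have h1 : Real.sqrt (p ⬝ᵥ p) ≤ 1 := sqrtLe one_pos.le (by linarith)
      have h2 : Real.sqrt (((Upᵀ *ᵥ x') - v) ⬝ᵥ ((Upᵀ *ᵥ x') - v)) ≤ 13/10 :=
        sqrtLe (by norm_num) (by linarith)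
      have h3 : |p ⬝ᵥ ((Upᵀ *ᵥ x') - v)| ≤ 13/10 := by
        have hmul : Real.sqrt (p ⬝ᵥ p) * Real.sqrt (((Upᵀ *ᵥ x') - v) ⬝ᵥ ((Upᵀ *ᵥ x') - v))
            ≤ 1 * (13/10) :=
          mul_le_mul h1 h2 (Real.sqrt_nonneg _) (by norm_num)
        linarith only [hcs, hmul]
      calc |p ⬝ᵥ (Upᵀ *ᵥ x')| ≤ |p ⬝ᵥ v| + |p ⬝ᵥ ((Upᵀ *ᵥ x') - v)| := by
            rw [hpsplit]; exact abs_add_le _ _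
      _ ≤ 23/10 := by linarith [hpv]
    have hzx'dec : z ⬝ᵥ x' = p ⬝ᵥ (Upᵀ *ᵥ x') + q ⬝ᵥ (Uᵀ *ᵥ x') := by
      conv_lhs => rw [← hdec x']
      rw [dotProduct_add, zdotU, zdotUp]
      ring
    have hqb : 67/10 ≤ q ⬝ᵥ (Uᵀ *ᵥ x') := by
      have := abs_le.mp hpa
      linarith
    have dUpU : ∀ (a : Fin (d - dOne) → ℝ) (b : Fin dOne → ℝ),
        (Up *ᵥ a) ⬝ᵥ (U *ᵥ b) = 0 := by
      intro a b
      rw [dotProduct_comm, dUUp]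
    have hx'dot : x' ⬝ᵥ x' = (Upᵀ *ᵥ x') ⬝ᵥ (Upᵀ *ᵥ x') + (Uᵀ *ᵥ x') ⬝ᵥ (Uᵀ *ᵥ x') := by
      conv_lhs => rw [← hdec x']
      simp only [dotProduct_add, add_dotProduct, dUU, dUpUp, dUUp, dUpU]
      ring
    have hb'x' : (Uᵀ *ᵥ x') ⬝ᵥ (Uᵀ *ᵥ x') ≤ x' ⬝ᵥ x' := by
      rw [hx'dot]
      linarith [dotSelfNN (Upᵀ *ᵥ x')]
    have hx'n : Real.sqrt (x' ⬝ᵥ x') ≤ 2*(d:ℝ)^3 := by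
      have hx'y : x' = yv + xstar := by rw [hyv]; funext i; simp
      have ht := triIneq yv xstar
      rw [← hx'y] at ht
      have hxsn : Real.sqrt (xstar ⬝ᵥ xstar) ≤ 1 :=
        sqrtLe one_pos.le (by rw [hxsdot]; linarith)
      linarith [hyb.le]
    -- lower bound on ‖q‖
    have hQnn := dotSelfNN q
    have hsqQ := Real.sq_sqrt hQnn
    have hsq3 : 3/(d:ℝ)^3 ≤ Real.sqrt (q ⬝ᵥ q) := by
      have hcs := (le_abs_self _).trans (csAbs q (Uᵀ *ᵥ x'))
      have h1 : Real.sqrt ((Uᵀ *ᵥ x') ⬝ᵥ (Uᵀ *ᵥ x')) ≤ 2*(d:ℝ)^3 := by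
        calc Real.sqrt ((Uᵀ *ᵥ x') ⬝ᵥ (Uᵀ *ᵥ x')) ≤ Real.sqrt (x' ⬝ᵥ x') :=
              Real.sqrt_le_sqrt hb'x'
        _ ≤ 2*(d:ℝ)^3 := hx'n
      have h2 : q ⬝ᵥ (Uᵀ *ᵥ x') ≤ Real.sqrt (q ⬝ᵥ q) * (2*(d:ℝ)^3) := by
        calc q ⬝ᵥ (Uᵀ *ᵥ x') ≤ Real.sqrt (q ⬝ᵥ q) * Real.sqrt ((Uᵀ *ᵥ x') ⬝ᵥ (Uᵀ *ᵥ x')) := hcs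
        _ ≤ Real.sqrt (q ⬝ᵥ q) * (2*(d:ℝ)^3) :=
              mul_le_mul_of_nonneg_left h1 (Real.sqrt_nonneg _)
      rw [div_le_iff₀ hd3]
      linarith only [h2, hqb]
    have hQpos : 0 < q ⬝ᵥ q := by
      have h0 : 0 < Real.sqrt (q ⬝ᵥ q) := lt_of_lt_of_le (by positivity) hsq3
      rw [← Real.mul_self_sqrt hQnn]
      exact mul_pos h0 h0
    have hQd6 : 9 ≤ (q ⬝ᵥ q) * (d:ℝ)^6 := by
      have h1 := pow_le_pow_left₀ (by positivity : (0:ℝ) ≤ 3/(d:ℝ)^3) hsq3 2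
      rw [hsqQ] at h1
      have h2 : (3/(d:ℝ)^3)^2 * (d:ℝ)^6 = 9 := by field_simp; ring
      have h3 := mul_le_mul_of_nonneg_right h1 (by positivity : (0:ℝ) ≤ (d:ℝ)^6)
      rw [h2] at h3
      exact h3
    -- refined bound on L x'
    have hcompQ := hcomp hQpos
    have hlamd6 : lam * (d:ℝ)^6 = 1/(d:ℝ)^34 := by
      rw [hlam]
      field_simp
    have hLx'34 : L x' ≤ 14 * (1/(d:ℝ)^34) := by
      have h1 : L x' * ((q ⬝ᵥ q) * (d:ℝ)^6) ≤ 125 * (lam * (d:ℝ)^6) := by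
        linarith only [mul_le_mul_of_nonneg_right hcompQ
          (by positivity : (0:ℝ) ≤ (d:ℝ)^6)]
      rw [hlamd6] at h1
      have h2 := hLnn x'
      have h3 : (0:ℝ) ≤ 1/(d:ℝ)^34 := by positivity
      linarith only [h1, h3, mul_le_mul_of_nonneg_left hQd6 h2]
    have hE1 : ((Upᵀ *ᵥ x') - v) ⬝ᵥ ((Upᵀ *ᵥ x') - v) ≤ 1/100 := by
      have h1 : (14:ℝ) * (1/(d:ℝ)^34) ≤ 1/100 := by
        rw [mul_one_div, div_le_div_iff₀ (by positivity) (by norm_num)]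
        have h2 : (d:ℝ)^3 ≤ (d:ℝ)^34 := pow_le_pow_right₀ hd1R (by norm_num)
        linarith only [h2, hd3big]
      linarith [hterm1x, hLx'34]
    have hE1nn := dotSelfNN ((Upᵀ *ᵥ x') - v)
    have hη2 : (p ⬝ᵥ ((Upᵀ *ᵥ x') - v))^2 ≤ ((Upᵀ *ᵥ x') - v) ⬝ᵥ ((Upᵀ *ᵥ x') - v) := by
      have hc := csSq p ((Upᵀ *ᵥ x') - v)
      have hm := mul_le_mul_of_nonneg_right hpp1 hE1nn
      linarith only [hc, hm]
    -- split b' into the q-direction and its complement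
    set K : ℝ := q ⬝ᵥ (Uᵀ *ᵥ x') with hK
    set β : ℝ := K / (q ⬝ᵥ q) with hβ
    set w : Fin dOne → ℝ := (Uᵀ *ᵥ x') - β • q with hw
    have hqw : q ⬝ᵥ w = 0 := by
      rw [hw, dotProduct_sub, dotProduct_smul, smul_eq_mul, ← hK, hβ]
      field_simp
      ring
    have hwq : w ⬝ᵥ q = 0 := by rw [dotProduct_comm]; exact hqw
    have hwb : Uᵀ *ᵥ x' = β • q + w := by rw [hw]; abel
    have hwnn := dotSelfNN w
    -- dropping the w-component decreases L by exactly lam * ‖w‖²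
    have hxUw : x' ⬝ᵥ (U *ᵥ w) = w ⬝ᵥ w := by
      rw [dotProduct_comm, dotMulVecLeft]
      conv_lhs => rw [hwb]
      rw [dotProduct_add, dotProduct_smul, smul_eq_mul, hwq]
      ring
    have hUw1 : Upᵀ *ᵥ (x' - U *ᵥ w) = Upᵀ *ᵥ x' := by
      rw [Matrix.mulVec_sub, hUptU, sub_zero]
    have hUw2 : z ⬝ᵥ (x' - U *ᵥ w) = z ⬝ᵥ x' := by
      rw [dotProduct_sub, zdotU, hqw, sub_zero]
    have hUw3 : (x' - U *ᵥ w) ⬝ᵥ (x' - U *ᵥ w) = x' ⬝ᵥ x' - w ⬝ᵥ w := by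
      simp only [sub_dotProduct, dotProduct_sub]
      rw [dUU, hxUw, dotProduct_comm (U *ᵥ w) x', hxUw]
      ring
    have hidentity : L (x' - U *ᵥ w) = L x' - lam * (w ⬝ᵥ w) := by
      rw [hL, hL, hUw1, hUw2, hUw3]
      ring
    have hWQ : (w ⬝ᵥ w) * (q ⬝ᵥ q) ≤ 5/2 := by
      have h1 := hLcmp (x' - U *ᵥ w)
      rw [hidentity] at h1
      -- 10201 * lam * W ≤ 201 * L x'
      have h2 : 10201 * (lam * (w ⬝ᵥ w)) ≤ 201 * L x' := by linarith
      have h3 : 10201 * (lam * (w ⬝ᵥ w)) * (q ⬝ᵥ q) ≤ 201 * (L x' * (q ⬝ᵥ q)) := by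
        linarith only [mul_le_mul_of_nonneg_right h2 hQpos.le]
      have h4 : 10201 * (lam * ((w ⬝ᵥ w) * (q ⬝ᵥ q))) ≤ 201 * (125 * lam) := by
        linarith only [h3, mul_le_mul_of_nonneg_left hcompQ (by norm_num : (0:ℝ) ≤ 201)]
      have h5 : lam * ((w ⬝ᵥ w) * (q ⬝ᵥ q)) ≤ lam * (5/2) := by
        linarith only [h4, hlam0.le]
      exact le_of_mul_le_mul_left h5 hlam0
    -- decomposition of yv
    have hyvdec : yv = Up *ᵥ ((Upᵀ *ᵥ x') - v) + U *ᵥ (Uᵀ *ᵥ x') := by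
      rw [hyv, hxs]
      conv_lhs => rw [← hdec x']
      rw [Matrix.mulVec_sub]
      abel
    have hbb' : (Uᵀ *ᵥ x') ⬝ᵥ (Uᵀ *ᵥ x') = β^2 * (q ⬝ᵥ q) + w ⬝ᵥ w := by
      conv_lhs => rw [hwb]
      simp only [dotProduct_add, add_dotProduct, smul_dotProduct,
        dotProduct_smul, smul_eq_mul, hqw, hwq]
      ring
    have hY : yv ⬝ᵥ yv = ((Upᵀ *ᵥ x') - v) ⬝ᵥ ((Upᵀ *ᵥ x') - v) + β^2 * (q ⬝ᵥ q) + w ⬝ᵥ w := by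
      rw [hyvdec]
      simp only [dotProduct_add, add_dotProduct, dUU, dUpUp, dUUp, dUpU]
      rw [hbb']
      ring
    have hyUq : yv ⬝ᵥ (U *ᵥ q) = K := by
      rw [hyv, sub_dotProduct]
      have h1 : x' ⬝ᵥ (U *ᵥ q) = K := by
        rw [dotProduct_comm, dotMulVecLeft, ← hK]
      have h2 : xstar ⬝ᵥ (U *ᵥ q) = 0 := by
        rw [hxs, dotProduct_comm, dUUp]
      rw [h1, h2, sub_zero]
    have hyzU : yv ⬝ᵥ zU = K := by rw [hzU]; exact hyUq
    have hzUyv : zU ⬝ᵥ yv = K := by rw [dotProduct_comm]; exact hyzU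
    have hzy : z ⬝ᵥ yv = p ⬝ᵥ ((Upᵀ *ᵥ x') - v) + K := by
      rw [hyv, dotProduct_sub, hzx'dec, hzxs, dotProduct_sub]
      ring
    have hb2Q : β^2 * (q ⬝ᵥ q) * (q ⬝ᵥ q) = K^2 := by
      rw [hβ]; field_simp
    have hYQ : (yv ⬝ᵥ yv) * (q ⬝ᵥ q) =
        (((Upᵀ *ᵥ x') - v) ⬝ᵥ ((Upᵀ *ᵥ x') - v)) * (q ⬝ᵥ q) + K^2 + (w ⬝ᵥ w) * (q ⬝ᵥ q) := by
      rw [hY]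
      linear_combination hb2Q
    have hYnn := dotSelfNN yv
    have hK67 : 67/10 ≤ K := hqb
    have hK2 : (4489:ℝ)/100 ≤ K^2 := by nlinarith only [hK67]
    have hYpos : 0 < yv ⬝ᵥ yv := by
      linarith only [hYQ, hK2, mul_nonneg hE1nn hQpos.le, mul_nonneg hwnn hQpos.le,
        mul_le_mul_of_nonneg_left hqq1 hYnn]
    -- the projection error
    set ξ : ℝ := (z ⬝ᵥ yv) / (yv ⬝ᵥ yv) with hξ
    set T : Fin d → ℝ := ξ • yv - zU with hT
    have hTT : T ⬝ᵥ T = ξ^2 * (yv ⬝ᵥ yv) - 2*(ξ*K) + (q ⬝ᵥ q) := by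
      rw [hT]
      simp only [sub_dotProduct, dotProduct_sub, smul_dotProduct,
        dotProduct_smul, smul_eq_mul]
      rw [hyzU, hzUyv, hzUq]
      ring
    have hTTY : (T ⬝ᵥ T) * (yv ⬝ᵥ yv) =
        (q ⬝ᵥ q) * (yv ⬝ᵥ yv) + (p ⬝ᵥ ((Upᵀ *ᵥ x') - v))^2 - K^2 := by
      rw [hTT, hξ, hzy]
      field_simp
      ring
    have hTTle : T ⬝ᵥ T ≤ (1/9) * (q ⬝ᵥ q) := by
      have hmulY : (T ⬝ᵥ T) * (yv ⬝ᵥ yv) ≤ ((1/9) * (q ⬝ᵥ q)) * (yv ⬝ᵥ yv) := by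
        linarith only [hTTY, hYQ, hη2, hE1, hWQ, hK2,
          mul_le_mul_of_nonneg_left hqq1 hE1nn]
      exact le_of_mul_le_mul_right hmulY hYpos
    rw [hzUq]
    have h13 : Real.sqrt (T ⬝ᵥ T) ≤ (1/3) * Real.sqrt (q ⬝ᵥ q) := by
      refine sqrtLe (by positivity) ?_
      rw [mul_pow, hsqQ]
      calc T ⬝ᵥ T ≤ (1/9) * (q ⬝ᵥ q) := hTTle
      _ = (1/3)^2 * (q ⬝ᵥ q) := by norm_num
    have h67 : (0:ℝ) ≤ 67/(d:ℝ)^3 := by positivity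
    linarith
end

section
/- Let 0 < ε < 1/8, 0 < σ_min ≤ σ_max, and κ = σ_max/σ_min. Let M ∈ ℝ^{n×d} have least singular value at least σ_min and largest singular value at most σ_max. Let B = { x ∈ [−1,1]^d : every coordinate of x is an integer multiple of ε/(100·κ·d) }. Suppose Y ∈ ℝ^{d×d} is symmetric positive semidefinite and satisfies |xᵀ Y x − ‖M x‖₂²| ≤ (ε/2)·‖M x‖₂² for all x ∈ B. Then the largest eigenvalue of Y is at most 4·σ_max². -/
open Matrix

private lemma dot_self_nonneg {m : ℕ} (w : Fin m → ℝ) : 0 ≤ w ⬝ᵥ w :=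
  Finset.sum_nonneg fun i _ => mul_self_nonneg (w i)

private lemma dot_transpose_mul {n d : ℕ} (M : Matrix (Fin n) (Fin d) ℝ) (x : Fin d → ℝ) :
    x ⬝ᵥ ((Mᵀ * M) *ᵥ x) = (M *ᵥ x) ⬝ᵥ (M *ᵥ x) := by
  rw [← mulVec_mulVec, dotProduct_mulVec, vecMul_transpose]

set_option maxHeartbeats 2000000 in
/-- Claim C.1, used in Step 2 of the proof of Lemma 5.10. If the
quadratic form of a symmetric PSD matrix `Y` agrees with `‖Mx‖₂²` up to a factor `ε/2` on
the grid `B` of points of `[−1,1]^d` whose coordinates are integer multiples of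
`ε/(100κd)` (κ = σ_max/σ_min), then the largest eigenvalue of `Y` is at most `4σ_max²`,
i.e. `Y ⪯ 4σ_max²·I`. -/
theorem grid_agreement_spectral_bound {n d : ℕ}
    (ε σmin σmax : ℝ) (hε0 : 0 < ε) (hε : ε < 1 / 8)
    (hσ0 : 0 < σmin) (hσ : σmin ≤ σmax)
    (M : Matrix (Fin n) (Fin d) ℝ)
    (hMlow : (Mᵀ * M - σmin ^ 2 • (1 : Matrix (Fin d) (Fin d) ℝ)).PosSemidef)
    (hMhigh : (σmax ^ 2 • (1 : Matrix (Fin d) (Fin d) ℝ) - Mᵀ * M).PosSemidef)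
    (Y : Matrix (Fin d) (Fin d) ℝ) (hY : Y.PosSemidef)
    (hYgrid : ∀ x : Fin d → ℝ,
      (∀ i, |x i| ≤ 1 ∧ ∃ k : ℤ, x i = k * (ε / (100 * (σmax / σmin) * d))) →
      |x ⬝ᵥ (Y *ᵥ x) - (M *ᵥ x) ⬝ᵥ (M *ᵥ x)| ≤ (ε / 2) * ((M *ᵥ x) ⬝ᵥ (M *ᵥ x))) :
    ((4 * σmax ^ 2) • (1 : Matrix (Fin d) (Fin d) ℝ) - Y).PosSemidef := by
  classical
  have hσmax0 : 0 < σmax := lt_of_lt_of_le hσ0 hσ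
  set δ : ℝ := ε / (100 * (σmax / σmin) * (d : ℝ)) with hδdef
  -- bound on ‖Mx‖² from above
  have hMx : ∀ z : Fin d → ℝ, (M *ᵥ z) ⬝ᵥ (M *ᵥ z) ≤ σmax ^ 2 * (z ⬝ᵥ z) := by
    intro z
    have h := hMhigh.dotProduct_mulVec_nonneg z
    simp only [star_trivial, sub_mulVec, smul_mulVec, one_mulVec,
      dotProduct_sub, dotProduct_smul, smul_eq_mul] at h
    rw [dot_transpose_mul] at h
    linarith
  -- key claim: quadratic form of Y on small vectors
  have key : ∀ u : Fin d → ℝ, u ⬝ᵥ u ≤ 1 / 4 → u ⬝ᵥ (Y *ᵥ u) ≤ σmax ^ 2 := by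
    intro u huu
    rcases Nat.eq_zero_or_pos d with hd | hd
    · subst hd
      have : u ⬝ᵥ (Y *ᵥ u) = 0 := by simp [dotProduct]
      rw [this]; positivity
    have hd1 : (1 : ℝ) ≤ (d : ℝ) := by exact_mod_cast hd
    have hκ : 1 ≤ σmax / σmin := (one_le_div hσ0).mpr hσ
    have hδ0 : 0 < δ := by
      apply div_pos hε0; nlinarith
    have hδd : δ * d ≤ 1 / 800 := by
      have hde : (100 : ℝ) * (d : ℝ) ≤ 100 * (σmax / σmin) * d := by nlinarith
      have h1 : δ ≤ ε / (100 * (d : ℝ)) :=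
        div_le_div_of_nonneg_left hε0.le (by nlinarith) hde
      have h2 : ε / (100 * (d : ℝ)) * d = ε / 100 := by
        field_simp
      nlinarith [mul_le_mul_of_nonneg_right h1 (by positivity : (0:ℝ) ≤ (d:ℝ))]
    have hδ1 : δ ≤ 1 / 800 := by nlinarith
    -- grid quadratic form bound
    have qgrid : ∀ x : Fin d → ℝ,
        (∀ i, |x i| ≤ 1 ∧ ∃ k : ℤ, x i = k * δ) →
        x ⬝ᵥ (Y *ᵥ x) ≤ (1 + ε / 2) * (σmax ^ 2 * (x ⬝ᵥ x)) := by
      intro x hx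
      have h := (abs_le.mp (hYgrid x hx)).2
      have hm0 : 0 ≤ (M *ᵥ x) ⬝ᵥ (M *ᵥ x) := dot_self_nonneg _
      have hm := hMx x
      nlinarith
    -- diagonal entries of Y
    have Ydiag : ∀ i : Fin d, Y i i ≤ 2 * σmax ^ 2 := by
      intro i
      set xi : Fin d → ℝ := Pi.single i δ with hxi
      have hgridxi : ∀ j, |xi j| ≤ 1 ∧ ∃ k : ℤ, xi j = k * δ := by
        intro j
        rcases eq_or_ne j i with h | h
        · subst h
          constructor
          · simp [hxi, Pi.single_apply, abs_of_pos hδ0]; linarith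
          · exact ⟨1, by simp [hxi, Pi.single_apply]⟩
        · constructor
          · simp [hxi, Pi.single_apply, h]
          · exact ⟨0, by simp [hxi, Pi.single_apply, h]⟩
      have h := qgrid xi hgridxi
      have h1 : xi ⬝ᵥ (Y *ᵥ xi) = δ * (Y i i * δ) := by
        rw [hxi, mulVec_single, single_dotProduct]; simp
      have h2 : xi ⬝ᵥ xi = δ * δ := by
        rw [hxi, single_dotProduct]; simp [Pi.single_apply]
      rw [h1, h2] at h
      have hδ2 : 0 < δ * δ := by positivity
      have h5 : Y i i * (δ * δ) ≤ (2 * σmax ^ 2) * (δ * δ) := by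
        nlinarith [mul_nonneg (sq_nonneg σmax) hδ2.le]
      exact le_of_mul_le_mul_right h5 hδ2
    -- trace bound
    have Tbound : (∑ i, Y i i) ≤ (d : ℝ) * (2 * σmax ^ 2) := by
      calc (∑ i, Y i i) ≤ ∑ _i : Fin d, 2 * σmax ^ 2 :=
            Finset.sum_le_sum fun i _ => Ydiag i
        _ = (d : ℝ) * (2 * σmax ^ 2) := by simp [Finset.sum_const, mul_comm]
    -- Frobenius-type bound via factorization Y = Bᴴ B
    obtain ⟨B, hB⟩ : ∃ B : Matrix (Fin d) (Fin d) ℝ, Y = Bᴴ * B := by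
      open MatrixOrder in
      exact CStarAlgebra.nonneg_iff_eq_star_mul_self.mp hY.nonneg
    have qB : ∀ w : Fin d → ℝ, w ⬝ᵥ (Y *ᵥ w) = (B *ᵥ w) ⬝ᵥ (B *ᵥ w) := by
      intro w
      rw [hB, ← mulVec_mulVec, dotProduct_mulVec, vecMul_conjTranspose]
      simp
    have qfrob : ∀ w : Fin d → ℝ,
        w ⬝ᵥ (Y *ᵥ w) ≤ ((d : ℝ) * (2 * σmax ^ 2)) * (w ⬝ᵥ w) := by
      intro w
      rw [qB w]
      have h1 : (B *ᵥ w) ⬝ᵥ (B *ᵥ w) = ∑ k, (∑ i, B k i * w i) ^ 2 := by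
        simp [dotProduct, mulVec, sq]
      have h2 : ∀ k : Fin d, (∑ i, B k i * w i) ^ 2 ≤ (∑ i, B k i ^ 2) * (w ⬝ᵥ w) := by
        intro k
        have := Finset.sum_mul_sq_le_sq_mul_sq Finset.univ (fun i => B k i) w
        have hww : w ⬝ᵥ w = ∑ i, w i ^ 2 := by simp [dotProduct, sq]
        rw [hww]; exact this
      have h3 : (∑ k, ∑ i, B k i ^ 2) = ∑ i, Y i i := by
        rw [hB, Finset.sum_comm]
        simp [Matrix.mul_apply, sq]
      calc (B *ᵥ w) ⬝ᵥ (B *ᵥ w) = ∑ k, (∑ i, B k i * w i) ^ 2 := h1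
        _ ≤ ∑ k, (∑ i, B k i ^ 2) * (w ⬝ᵥ w) := Finset.sum_le_sum fun k _ => h2 k
        _ = (∑ k, ∑ i, B k i ^ 2) * (w ⬝ᵥ w) := by rw [Finset.sum_mul]
        _ = (∑ i, Y i i) * (w ⬝ᵥ w) := by rw [h3]
        _ ≤ ((d : ℝ) * (2 * σmax ^ 2)) * (w ⬝ᵥ w) :=
            mul_le_mul_of_nonneg_right Tbound (dot_self_nonneg w)
    -- coordinates of u are small
    have hui : ∀ i, |u i| ≤ 1 / 2 := by
      intro i
      have h1 : u i * u i ≤ u ⬝ᵥ u := by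
        have := Finset.single_le_sum (f := fun j => u j * u j)
          (fun j _ => mul_self_nonneg (u j)) (Finset.mem_univ i)
        exact this
      have h2 : u i * u i ≤ 1 / 4 := le_trans h1 huu
      refine abs_le.mpr ⟨?_, ?_⟩
      · nlinarith [sq_nonneg (u i + 1 / 2)]
      · nlinarith [sq_nonneg (u i - 1 / 2)]
    -- rounding to the grid
    set x : Fin d → ℝ := fun i => ((round (u i / δ) : ℤ) : ℝ) * δ with hxdef
    set e : Fin d → ℝ := fun i => u i - x i with hedef
    have herr : ∀ i, |e i| ≤ δ / 2 := by
      intro i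
      have h1 : e i = (u i / δ - round (u i / δ)) * δ := by
        have hc : (u i / δ) * δ = u i := div_mul_cancel₀ _ hδ0.ne'
        simp only [hedef, hxdef]
        rw [sub_mul, hc]
      rw [h1, abs_mul, abs_of_pos hδ0]
      have h2 := abs_sub_round (u i / δ)
      calc |u i / δ - ↑(round (u i / δ))| * δ ≤ (1 / 2) * δ :=
            mul_le_mul_of_nonneg_right h2 hδ0.le
        _ = δ / 2 := by ring
    have hxabs : ∀ i, |x i| ≤ 1 := by
      intro i
      have h1 : x i = u i - e i := by simp [hedef]
      rw [h1]
      have := hui i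
      have := herr i
      have h2 : |u i - e i| ≤ |u i| + |e i| := abs_sub _ _
      linarith
    have hgridx : ∀ i, |x i| ≤ 1 ∧ ∃ k : ℤ, x i = k * δ :=
      fun i => ⟨hxabs i, ⟨round (u i / δ), rfl⟩⟩
    -- norms
    have hterm : ∀ i, e i * e i ≤ δ ^ 2 / 4 := by
      intro i
      have h := herr i
      have h2 := mul_self_le_mul_self (abs_nonneg (e i)) h
      rw [abs_mul_abs_self] at h2
      nlinarith [h2]
    have hee : e ⬝ᵥ e ≤ (d : ℝ) * (δ ^ 2 / 4) := by
      have h : (∑ i, e i * e i) ≤ ∑ _i : Fin d, δ ^ 2 / 4 :=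
        Finset.sum_le_sum fun i _ => hterm i
      simpa [dotProduct, Finset.sum_const, Finset.card_univ, mul_comm] using h
    have hxx : x ⬝ᵥ x ≤ 1 / 2 + (d : ℝ) * (δ ^ 2 / 2) := by
      have h1 : x ⬝ᵥ x ≤ 2 * (u ⬝ᵥ u) + 2 * (e ⬝ᵥ e) := by
        have : ∀ i : Fin d, x i * x i ≤ 2 * (u i * u i) + 2 * (e i * e i) := by
          intro i
          have h1 : x i = u i - e i := by simp [hedef]
          rw [h1]
          nlinarith [sq_nonneg (u i + e i)]
        calc x ⬝ᵥ x = ∑ i, x i * x i := rfl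
          _ ≤ ∑ i, (2 * (u i * u i) + 2 * (e i * e i)) :=
              Finset.sum_le_sum fun i _ => this i
          _ = 2 * (u ⬝ᵥ u) + 2 * (e ⬝ᵥ e) := by
              rw [Finset.sum_add_distrib, ← Finset.mul_sum, ← Finset.mul_sum]; rfl
      nlinarith
    -- quadratic form pieces
    set qx : ℝ := x ⬝ᵥ (Y *ᵥ x) with hqxdef
    set qe : ℝ := e ⬝ᵥ (Y *ᵥ e) with hqedef
    have hqx : qx ≤ (1 + ε / 2) * (σmax ^ 2 * (1 / 2 + (d : ℝ) * (δ ^ 2 / 2))) := by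
      have h := qgrid x hgridx
      have h2 : σmax ^ 2 * (x ⬝ᵥ x) ≤ σmax ^ 2 * (1 / 2 + (d : ℝ) * (δ ^ 2 / 2)) := by
        apply mul_le_mul_of_nonneg_left hxx (by positivity)
      nlinarith
    have hqe : qe ≤ σmax ^ 2 * ((d : ℝ) * δ) ^ 2 / 2 := by
      have h := qfrob e
      have h2 : ((d : ℝ) * (2 * σmax ^ 2)) * (e ⬝ᵥ e) ≤
          ((d : ℝ) * (2 * σmax ^ 2)) * ((d : ℝ) * (δ ^ 2 / 4)) := by
        apply mul_le_mul_of_nonneg_left hee (by positivity)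
      have h3 : ((d : ℝ) * (2 * σmax ^ 2)) * ((d : ℝ) * (δ ^ 2 / 4)) =
          σmax ^ 2 * ((d : ℝ) * δ) ^ 2 / 2 := by ring
      linarith
    -- cross terms
    have hcross : 2 * (x ⬝ᵥ (Y *ᵥ e)) + 2 * (e ⬝ᵥ (Y *ᵥ x)) ≤ qx + 4 * qe := by
      have h := hY.dotProduct_mulVec_nonneg (x - (2 : ℝ) • e)
      simp only [star_trivial, mulVec_sub, mulVec_smul, dotProduct_sub, sub_dotProduct,
        dotProduct_smul, smul_dotProduct, smul_eq_mul] at h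
      nlinarith
    -- assemble
    have hu : u = x + e := by funext i; simp [hedef]
    have hqu : u ⬝ᵥ (Y *ᵥ u) = qx + (x ⬝ᵥ (Y *ᵥ e) + e ⬝ᵥ (Y *ᵥ x)) + qe := by
      rw [hu]
      simp only [mulVec_add, dotProduct_add, add_dotProduct, hqxdef, hqedef]
      ring
    have hs : (d : ℝ) * δ ≤ 1 / 800 := by nlinarith
    have hs0 : 0 < (d : ℝ) * δ := by positivity
    have hdd2 : (d : ℝ) * (δ ^ 2 / 2) ≤ ((d : ℝ) * δ) ^ 2 / 2 := by nlinarith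
    have hss : ((d : ℝ) * δ) ^ 2 ≤ 1 / 640000 := by nlinarith
    have hA : (0:ℝ) ≤ σmax ^ 2 := sq_nonneg _
    have e1 : (d : ℝ) * (δ ^ 2 / 2) ≤ 1 / 1280000 := by nlinarith
    have e2 : σmax ^ 2 * (1 / 2 + (d : ℝ) * (δ ^ 2 / 2)) ≤
        σmax ^ 2 * (1 / 2 + 1 / 1280000) := by nlinarith
    have e2' : qx ≤ (1 + ε / 2) * (σmax ^ 2 * (1 / 2 + 1 / 1280000)) := by
      refine le_trans hqx ?_
      apply mul_le_mul_of_nonneg_left e2 (by linarith)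
    have e3 : qx ≤ (17 / 16) * (σmax ^ 2 * (1 / 2 + 1 / 1280000)) := by
      nlinarith [mul_nonneg hA (by norm_num : (0:ℝ) ≤ 1 / 2 + 1 / 1280000)]
    have e4 : qe ≤ σmax ^ 2 * (1 / 1280000) := by
      have h := mul_le_mul_of_nonneg_left hss (by positivity : (0:ℝ) ≤ σmax ^ 2 / 2)
      linarith [hqe]
    have e5 : x ⬝ᵥ (Y *ᵥ e) + e ⬝ᵥ (Y *ᵥ x) ≤ qx / 2 + 2 * qe := by linarith [hcross]
    rw [hqu]
    linarith [e3, e4, e5, hA]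
  -- conclude positive semidefiniteness
  refine Matrix.PosSemidef.of_dotProduct_mulVec_nonneg ?_ ?_
  · have h1 : ((4 * σmax ^ 2) • (1 : Matrix (Fin d) (Fin d) ℝ) - Y)ᴴ =
        (4 * σmax ^ 2) • (1 : Matrix (Fin d) (Fin d) ℝ) - Y := by
      rw [conjTranspose_sub, conjTranspose_smul, conjTranspose_one, hY.1.eq]
      simp
    exact h1
  · intro v
    simp only [star_trivial, sub_mulVec, smul_mulVec, one_mulVec,
      dotProduct_sub, dotProduct_smul, smul_eq_mul]
    rcases eq_or_lt_of_le (dot_self_nonneg v) with hv | hv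
    · -- v ⬝ᵥ v = 0 implies v = 0
      have hv0 : v = 0 := by
        funext i
        have h1 : ∑ j, v j * v j = 0 := hv.symm
        have h2 := (Finset.sum_eq_zero_iff_of_nonneg
          (fun j _ => mul_self_nonneg (v j))).mp h1 i (Finset.mem_univ i)
        exact mul_self_eq_zero.mp h2
      subst hv0
      simp
    · set r : ℝ := Real.sqrt (v ⬝ᵥ v) with hrdef
      have hr0 : 0 < r := Real.sqrt_pos.mpr hv
      have hr2 : r ^ 2 = v ⬝ᵥ v := Real.sq_sqrt hv.le
      set u : Fin d → ℝ := (1 / (2 * r)) • v with hudef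
      have huu : u ⬝ᵥ u ≤ 1 / 4 := by
        have h1 : u ⬝ᵥ u = (1 / (2 * r)) * ((1 / (2 * r)) * (v ⬝ᵥ v)) := by
          rw [hudef, smul_dotProduct, dotProduct_smul]; simp [smul_eq_mul]
        rw [h1, ← hr2]
        have heq : 1 / (2 * r) * (1 / (2 * r) * r ^ 2) = 1 / 4 := by
          field_simp
          ring
        rw [heq]
      have h2 := key u huu
      have h3 : u ⬝ᵥ (Y *ᵥ u) = (1 / (2 * r)) * ((1 / (2 * r)) * (v ⬝ᵥ (Y *ᵥ v))) := by
        rw [hudef, mulVec_smul, smul_dotProduct, dotProduct_smul]; simp [smul_eq_mul]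
      rw [h3] at h2
      have h4 : v ⬝ᵥ (Y *ᵥ v) ≤ 4 * r ^ 2 * σmax ^ 2 := by
        have hr2' : (2 * r) ^ 2 > 0 := by positivity
        have := mul_le_mul_of_nonneg_left h2 (le_of_lt hr2')
        have heq : (2 * r) ^ 2 * ((1 / (2 * r)) * ((1 / (2 * r)) * (v ⬝ᵥ (Y *ᵥ v)))) =
            v ⬝ᵥ (Y *ᵥ v) := by field_simp
        rw [heq] at this
        nlinarith
      rw [← hr2]
      nlinarith
end

section
/- Let 0 < ε < 1/8, 0 < σ_min ≤ σ_max, and κ = σ_max/σ_min. Let M ∈ ℝ^{n×d} have least singular value at least σ_min and largest singular value at most σ_max. Let B = { x ∈ [−1,1]^d : every coordinate of x is an integer multiple of ε/(100·κ·d) }. Suppose Y ∈ ℝ^{d×d} is symmetric positive semidefinite and satisfies |xᵀ Y x − ‖M x‖₂²| ≤ (ε/2)·‖M x‖₂² for all x ∈ B. Then for every x ∈ ℝ^d, |xᵀ Y x − ‖M x‖₂²| ≤ ε·‖M x‖₂²; equivalently (1−ε)·MᵀM ⪯ Y ⪯ (1+ε)·MᵀM. -/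
open Matrix

section helpers
variable {n d : ℕ}

lemma dotSelf_nonneg (v : Fin n → ℝ) : 0 ≤ v ⬝ᵥ v :=
  Finset.sum_nonneg fun i _ => mul_self_nonneg _

lemma dot_le_sqrt (u v : Fin n → ℝ) :
    u ⬝ᵥ v ≤ Real.sqrt (u ⬝ᵥ u) * Real.sqrt (v ⬝ᵥ v) := by
  have h : (u ⬝ᵥ v) ^ 2 ≤ (u ⬝ᵥ u) * (v ⬝ᵥ v) := by
    simpa [dotProduct, sq] using
      Finset.sum_mul_sq_le_sq_mul_sq Finset.univ u v
  have h2 := Real.sqrt_le_sqrt h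
  rw [Real.sqrt_sq_eq_abs, Real.sqrt_mul (dotSelf_nonneg u)] at h2
  exact (le_abs_self _).trans h2

lemma sqrt_dot_add_le (u v : Fin n → ℝ) :
    Real.sqrt ((u + v) ⬝ᵥ (u + v)) ≤ Real.sqrt (u ⬝ᵥ u) + Real.sqrt (v ⬝ᵥ v) := by
  have hexp : (u + v) ⬝ᵥ (u + v) = u ⬝ᵥ u + 2 * (u ⬝ᵥ v) + v ⬝ᵥ v := by
    simp [add_dotProduct, dotProduct_add, dotProduct_comm v u]
    ring
  have hle : (u + v) ⬝ᵥ (u + v) ≤ (Real.sqrt (u ⬝ᵥ u) + Real.sqrt (v ⬝ᵥ v)) ^ 2 := by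
    rw [hexp]
    have h1 := dot_le_sqrt u v
    have h2 := Real.sq_sqrt (dotSelf_nonneg u)
    have h3 := Real.sq_sqrt (dotSelf_nonneg v)
    nlinarith [Real.sqrt_nonneg (u ⬝ᵥ u), Real.sqrt_nonneg (v ⬝ᵥ v)]
  calc Real.sqrt ((u + v) ⬝ᵥ (u + v))
      ≤ Real.sqrt ((Real.sqrt (u ⬝ᵥ u) + Real.sqrt (v ⬝ᵥ v)) ^ 2) := Real.sqrt_le_sqrt hle
    _ = _ := Real.sqrt_sq (by positivity)

lemma quad_transpose_mul (A : Matrix (Fin n) (Fin d) ℝ) (x : Fin d → ℝ) :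
    x ⬝ᵥ ((Aᵀ * A) *ᵥ x) = (A *ᵥ x) ⬝ᵥ (A *ᵥ x) := by
  rw [← Matrix.mulVec_mulVec, Matrix.dotProduct_mulVec, Matrix.vecMul_transpose]

lemma psd_quad_nonneg {P : Matrix (Fin d) (Fin d) ℝ} (hP : P.PosSemidef) (x : Fin d → ℝ) :
    0 ≤ x ⬝ᵥ (P *ᵥ x) := by simpa using hP.dotProduct_mulVec_nonneg x

lemma quad_smul (P : Matrix (Fin d) (Fin d) ℝ) (c : ℝ) (u : Fin d → ℝ) :
    (c • u) ⬝ᵥ (P *ᵥ (c • u)) = c ^ 2 * (u ⬝ᵥ (P *ᵥ u)) := by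
  rw [Matrix.mulVec_smul, smul_dotProduct, dotProduct_smul]
  simp [smul_eq_mul]; ring

lemma mdot_smul (A : Matrix (Fin n) (Fin d) ℝ) (c : ℝ) (u : Fin d → ℝ) :
    (A *ᵥ (c • u)) ⬝ᵥ (A *ᵥ (c • u)) = c ^ 2 * ((A *ᵥ u) ⬝ᵥ (A *ᵥ u)) := by
  rw [Matrix.mulVec_smul, smul_dotProduct, dotProduct_smul]
  simp [smul_eq_mul]; ring

end helpers

set_option maxHeartbeats 1600000 in
/-- ε-net extension argument, Step 2 of the proof of Lemma 5.10. If the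
quadratic form of a symmetric PSD matrix `Y` agrees with `‖Mx‖₂²` up to a factor `ε/2` on
the grid `B` of points of `[−1,1]^d` whose coordinates are integer multiples of
`ε/(100κd)` (κ = σ_max/σ_min), then for every `x ∈ ℝ^d`,
`|xᵀYx − ‖Mx‖₂²| ≤ ε‖Mx‖₂²`; equivalently `(1−ε)MᵀM ⪯ Y ⪯ (1+ε)MᵀM`. -/
theorem grid_agreement_extends_to_all {n d : ℕ}
    (ε σmin σmax : ℝ) (hε0 : 0 < ε) (hε : ε < 1 / 8)
    (hσ0 : 0 < σmin) (hσ : σmin ≤ σmax)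
    (M : Matrix (Fin n) (Fin d) ℝ)
    (hMlow : (Mᵀ * M - σmin ^ 2 • (1 : Matrix (Fin d) (Fin d) ℝ)).PosSemidef)
    (hMhigh : (σmax ^ 2 • (1 : Matrix (Fin d) (Fin d) ℝ) - Mᵀ * M).PosSemidef)
    (Y : Matrix (Fin d) (Fin d) ℝ) (hY : Y.PosSemidef)
    (hYgrid : ∀ x : Fin d → ℝ,
      (∀ i, |x i| ≤ 1 ∧ ∃ k : ℤ, x i = k * (ε / (100 * (σmax / σmin) * d))) →
      |x ⬝ᵥ (Y *ᵥ x) - (M *ᵥ x) ⬝ᵥ (M *ᵥ x)| ≤ (ε / 2) * ((M *ᵥ x) ⬝ᵥ (M *ᵥ x))) :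
    (∀ x : Fin d → ℝ,
      |x ⬝ᵥ (Y *ᵥ x) - (M *ᵥ x) ⬝ᵥ (M *ᵥ x)| ≤ ε * ((M *ᵥ x) ⬝ᵥ (M *ᵥ x))) ∧
    (Y - (1 - ε) • (Mᵀ * M)).PosSemidef ∧ ((1 + ε) • (Mᵀ * M) - Y).PosSemidef := by
  have hσm0 : 0 < σmax := lt_of_lt_of_le hσ0 hσ
  set δ : ℝ := ε / (100 * (σmax / σmin) * d) with hδ
  -- spectral bounds on M
  have hlow : ∀ u : Fin d → ℝ, σmin ^ 2 * (u ⬝ᵥ u) ≤ (M *ᵥ u) ⬝ᵥ (M *ᵥ u) := by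
    intro u
    have h := psd_quad_nonneg hMlow u
    rw [Matrix.sub_mulVec, dotProduct_sub, quad_transpose_mul,
      Matrix.smul_mulVec, Matrix.one_mulVec, dotProduct_smul] at h
    simpa [smul_eq_mul] using sub_nonneg.mp h
  have hhigh : ∀ u : Fin d → ℝ, (M *ᵥ u) ⬝ᵥ (M *ᵥ u) ≤ σmax ^ 2 * (u ⬝ᵥ u) := by
    intro u
    have h := psd_quad_nonneg hMhigh u
    rw [Matrix.sub_mulVec, dotProduct_sub, quad_transpose_mul,
      Matrix.smul_mulVec, Matrix.one_mulVec, dotProduct_smul] at h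
    simpa [smul_eq_mul] using sub_nonneg.mp h
  -- diagonal entries of Y are bounded
  have hdiag : ∀ i : Fin d, Y i i ≤ 2 * σmax ^ 2 := by
    intro i
    have hd : (0:ℝ) < d := by exact_mod_cast i.pos
    have hδ0 : 0 < δ := by
      rw [hδ]; positivity
    have hδ1 : δ ≤ 1 / 100 := by
      rw [hδ]
      rw [div_le_div_iff₀ (by positivity) (by norm_num)]
      have h1 : (1:ℝ) ≤ σmax / σmin := (one_le_div hσ0).2 hσ
      have h2 : (1:ℝ) ≤ (d:ℝ) := by exact_mod_cast i.pos
      nlinarith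
    set t : ℝ := (⌊1/δ⌋ : ℤ) * δ with ht
    have hfl1 : (1:ℝ) ≤ (⌊1/δ⌋ : ℤ) := by
      have h1 : (1:ℝ) ≤ 1/δ := by rw [le_div_iff₀ hδ0]; linarith
      exact_mod_cast Int.le_floor.2 (by exact_mod_cast h1)
    have hfl2 : ((⌊1/δ⌋ : ℤ) : ℝ) ≤ 1/δ := Int.floor_le _
    have ht_pos : 0 < t := by rw [ht]; nlinarith
    have ht_le : t ≤ 1 := by
      rw [ht]
      calc ((⌊1/δ⌋ : ℤ) : ℝ) * δ ≤ (1/δ) * δ := by nlinarith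
        _ = 1 := by field_simp
    have hgrid := hYgrid (Pi.single i t) (by
      intro j
      rcases eq_or_ne j i with rfl | hji
      · refine ⟨by rw [Pi.single_eq_same]; rw [abs_of_pos ht_pos]; exact ht_le, ⟨⌊1/δ⌋, by rw [Pi.single_eq_same]⟩⟩
      · refine ⟨by rw [Pi.single_eq_of_ne hji]; simp, ⟨0, by rw [Pi.single_eq_of_ne hji]; simp⟩⟩)
    have hq1 : (Pi.single i t) ⬝ᵥ (Y *ᵥ (Pi.single i t)) = t * (Y i i * t) := by
      rw [Matrix.mulVec_single, single_dotProduct]; rfl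
    have hq2 : (M *ᵥ Pi.single i t) ⬝ᵥ (M *ᵥ Pi.single i t) ≤ σmax ^ 2 * (t * t) := by
      have := hhigh (Pi.single i t)
      rwa [single_dotProduct, Pi.single_eq_same] at this
    have hq3 : 0 ≤ (M *ᵥ Pi.single i t) ⬝ᵥ (M *ᵥ Pi.single i t) := dotSelf_nonneg _
    rw [hq1] at hgrid
    have habs := abs_le.mp hgrid
    have h1 : t * (Y i i * t) ≤ (1 + ε/2) * (M *ᵥ Pi.single i t ⬝ᵥ M *ᵥ Pi.single i t) := by
      linarith [habs.2]
    have h2 : (1 + ε/2) * (M *ᵥ Pi.single i t ⬝ᵥ M *ᵥ Pi.single i t)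
        ≤ (1 + ε/2) * (σmax ^ 2 * (t * t)) :=
      mul_le_mul_of_nonneg_left hq2 (by linarith)
    nlinarith [h1, h2, mul_pos ht_pos ht_pos,
      mul_nonneg (sq_nonneg σmax) (mul_pos ht_pos ht_pos).le]
  -- all entries of Y are bounded
  have hYnn : ∀ i : Fin d, 0 ≤ Y i i := by
    intro i
    have := psd_quad_nonneg hY (Pi.single i 1)
    rw [Matrix.mulVec_single, single_dotProduct, one_mul] at this
    simpa [op_smul_eq_mul, Matrix.col_apply] using this
  have hent : ∀ i j : Fin d, |Y i j| ≤ 2 * σmax ^ 2 := by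
    intro i j
    rcases eq_or_ne i j with rfl | hij
    · rw [abs_of_nonneg (hYnn i)]; exact hdiag i
    · have hsym : Y j i = Y i j := by
        have := hY.1.apply i j
        simpa using this
      have hplus := psd_quad_nonneg hY (Pi.single i 1 + Pi.single j 1)
      have hminus := psd_quad_nonneg hY (Pi.single i 1 - Pi.single j 1)
      rw [Matrix.mulVec_add, dotProduct_add, add_dotProduct,
        add_dotProduct, Matrix.mulVec_single, Matrix.mulVec_single,
        single_dotProduct, single_dotProduct,
        single_dotProduct, single_dotProduct] at hplus
      rw [sub_eq_add_neg, Matrix.mulVec_add, Matrix.mulVec_neg, dotProduct_add,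
        dotProduct_neg, add_dotProduct, add_dotProduct,
        neg_dotProduct, neg_dotProduct, Matrix.mulVec_single,
        Matrix.mulVec_single, single_dotProduct, single_dotProduct,
        single_dotProduct, single_dotProduct] at hminus
      simp only [Pi.smul_apply, op_smul_eq_mul, Matrix.col_apply, one_mul, mul_one] at hplus hminus
      have hdi := hdiag i
      have hdj := hdiag j
      rw [abs_le]
      constructor <;> nlinarith [hplus, hminus, hYnn i, hYnn j]
  -- factor Y
  obtain ⟨B, hB⟩ : ∃ B : Matrix (Fin d) (Fin d) ℝ, Y = Bᴴ * B := by
    classical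
    open scoped MatrixOrder in
    obtain ⟨X, hX, -, hXY⟩ := CFC.exists_sqrt_of_isSelfAdjoint_of_quasispectrumRestricts hY.isHermitian (QuasispectrumRestricts.nnreal_of_nonneg (Matrix.nonneg_iff_posSemidef.mpr hY))
    exact ⟨X, by rw [← hXY, ← star_eq_conjTranspose, hX.star_eq]⟩
  have hquadY : ∀ u : Fin d → ℝ, u ⬝ᵥ (Y *ᵥ u) = (B *ᵥ u) ⬝ᵥ (B *ᵥ u) := by
    intro u
    rw [hB, Matrix.conjTranspose_eq_transpose_of_trivial, quad_transpose_mul]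
  -- the core estimate for normalized vectors
  have core : ∀ u : Fin d → ℝ, 0 < d → (∀ i, |u i| ≤ 1) → 1 ≤ u ⬝ᵥ u →
      |u ⬝ᵥ (Y *ᵥ u) - (M *ᵥ u) ⬝ᵥ (M *ᵥ u)| ≤ ε * ((M *ᵥ u) ⬝ᵥ (M *ᵥ u)) := by
    intro u hd0 hu1 hu2
    have hd : (0:ℝ) < d := by exact_mod_cast hd0
    have hd1 : (1:ℝ) ≤ d := by exact_mod_cast hd0
    have hδ0 : 0 < δ := by rw [hδ]; positivity
    have hδne : δ ≠ 0 := ne_of_gt hδ0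
    have hdδ : (d:ℝ) * δ = ε * σmin / (100 * σmax) := by
      rw [hδ]; field_simp
    -- rounding to the grid
    have hex : ∀ v : ℝ, ∃ z : ℝ, (∃ k : ℤ, z = (k:ℝ) * δ) ∧ |z| ≤ |v| ∧ |v - z| ≤ δ := by
      intro v
      by_cases hv : 0 ≤ v
      · refine ⟨((⌊v / δ⌋ : ℤ):ℝ) * δ, ⟨⌊v / δ⌋, rfl⟩, ?_, ?_⟩
        · have h1 : ((⌊v / δ⌋ : ℤ):ℝ) ≤ v / δ := Int.floor_le _
          have h3 : (0:ℝ) ≤ ((⌊v / δ⌋ : ℤ):ℝ) := by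
            exact_mod_cast Int.floor_nonneg.2 (by positivity)
          have h4 : v / δ * δ = v := div_mul_cancel₀ _ hδne
          rw [abs_of_nonneg (mul_nonneg h3 hδ0.le), abs_of_nonneg hv]
          nlinarith
        · have h1 : ((⌊v / δ⌋ : ℤ):ℝ) ≤ v / δ := Int.floor_le _
          have h2 : v / δ - 1 < ((⌊v / δ⌋ : ℤ):ℝ) := Int.sub_one_lt_floor _
          have h4 : v / δ * δ = v := div_mul_cancel₀ _ hδne
          rw [abs_le]; constructor <;> nlinarith
      · push_neg at hv
        refine ⟨((⌈v / δ⌉ : ℤ):ℝ) * δ, ⟨⌈v / δ⌉, rfl⟩, ?_, ?_⟩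
        · have h1 : v / δ ≤ ((⌈v / δ⌉ : ℤ):ℝ) := Int.le_ceil _
          have h3 : ((⌈v / δ⌉ : ℤ):ℝ) ≤ 0 := by
            have : (⌈v / δ⌉ : ℤ) ≤ (0:ℤ) := Int.ceil_le.2 (by
              rw [Int.cast_zero]
              exact le_of_lt (div_neg_of_neg_of_pos hv hδ0))
            exact_mod_cast this
          have h4 : v / δ * δ = v := div_mul_cancel₀ _ hδne
          rw [abs_of_nonpos (mul_nonpos_of_nonpos_of_nonneg h3 hδ0.le), abs_of_nonpos hv.le]
          nlinarith
        · have h1 : v / δ ≤ ((⌈v / δ⌉ : ℤ):ℝ) := Int.le_ceil _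
          have h2 : ((⌈v / δ⌉ : ℤ):ℝ) < v / δ + 1 := Int.ceil_lt_add_one _
          have h4 : v / δ * δ = v := div_mul_cancel₀ _ hδne
          rw [abs_le]; constructor <;> nlinarith
    choose y hy1 hy2 hy3 using fun i => hex (u i)
    set h : Fin d → ℝ := u - y with hh
    have huyh : u = y + h := by rw [hh]; ring
    have hhd : ∀ i, |h i| ≤ δ := by
      intro i
      simpa [hh] using hy3 i
    have hhdot : h ⬝ᵥ h ≤ (d:ℝ) * δ^2 := by
      calc h ⬝ᵥ h = ∑ i, h i * h i := rfl
        _ ≤ ∑ _i : Fin d, δ^2 := Finset.sum_le_sum (fun i _ => by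
            have h1 := abs_le.mp (hhd i)
            nlinarith [h1.1, h1.2])
        _ = (d:ℝ) * δ^2 := by simp [Finset.card_univ]
    -- quadratic form of Y on the small vector h
    have hYh : h ⬝ᵥ (Y *ᵥ h) ≤ 2 * σmax^2 * ((d:ℝ) * δ)^2 := by
      have hstep : ∀ i : Fin d, h i * (Y *ᵥ h) i ≤ δ * ((d:ℝ) * (2 * σmax^2 * δ)) := by
        intro i
        have habsi : |(Y *ᵥ h) i| ≤ (d:ℝ) * (2 * σmax^2 * δ) := by
          calc |(Y *ᵥ h) i| = |∑ j, Y i j * h j| := rfl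
            _ ≤ ∑ j, |Y i j * h j| := Finset.abs_sum_le_sum_abs _ _
            _ ≤ ∑ _j : Fin d, 2 * σmax^2 * δ := Finset.sum_le_sum (fun j _ => by
                rw [abs_mul]
                exact mul_le_mul (hent i j) (hhd j) (abs_nonneg _) (by positivity))
            _ = (d:ℝ) * (2 * σmax^2 * δ) := by simp [Finset.card_univ]
        calc h i * (Y *ᵥ h) i ≤ |h i * (Y *ᵥ h) i| := le_abs_self _
          _ = |h i| * |(Y *ᵥ h) i| := abs_mul _ _
          _ ≤ δ * ((d:ℝ) * (2 * σmax^2 * δ)) :=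
              mul_le_mul (hhd i) habsi (abs_nonneg _) hδ0.le
      calc h ⬝ᵥ (Y *ᵥ h) = ∑ i, h i * (Y *ᵥ h) i := rfl
        _ ≤ ∑ _i : Fin d, δ * ((d:ℝ) * (2 * σmax^2 * δ)) :=
            Finset.sum_le_sum (fun i _ => hstep i)
        _ = (d:ℝ) * (δ * ((d:ℝ) * (2 * σmax^2 * δ))) := by simp [Finset.card_univ]
        _ = 2 * σmax^2 * ((d:ℝ) * δ)^2 := by ring
    -- arithmetic facts
    have AF2 : 2 * σmax^2 * ((d:ℝ) * δ)^2 ≤ (ε/70)^2 * σmin^2 := by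
      have heq : 2 * σmax^2 * (ε * σmin / (100 * σmax))^2 = ε^2 * σmin^2 / 5000 := by
        field_simp; ring
      rw [hdδ, heq]
      nlinarith [sq_nonneg (ε * σmin)]
    have AF1 : σmax^2 * ((d:ℝ) * δ^2) ≤ (ε/100)^2 * σmin^2 := by
      have hδle : δ ≤ (d:ℝ) * δ := by nlinarith
      have heq : σmax^2 * ((d:ℝ) * δ)^2 = (ε/100)^2 * σmin^2 := by
        rw [hdδ]; field_simp
      nlinarith [mul_nonneg (sq_nonneg σmax) (mul_nonneg hd.le hδ0.le), hδ0.le,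
        mul_nonneg (mul_nonneg (sq_nonneg σmax) hd.le) hδ0.le]
    -- grid bound at y
    have hgrid := hYgrid y (fun i => ⟨(hy2 i).trans (hu1 i), hy1 i⟩)
    -- square-root quantities
    set a := Real.sqrt ((M *ᵥ u) ⬝ᵥ (M *ᵥ u)) with ha
    set a' := Real.sqrt ((M *ᵥ y) ⬝ᵥ (M *ᵥ y)) with ha'
    set b := Real.sqrt ((B *ᵥ u) ⬝ᵥ (B *ᵥ u)) with hbdef
    set b' := Real.sqrt ((B *ᵥ y) ⬝ᵥ (B *ᵥ y)) with hb'
    set μ := Real.sqrt ((M *ᵥ h) ⬝ᵥ (M *ᵥ h)) with hμdef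
    set η := Real.sqrt ((B *ᵥ h) ⬝ᵥ (B *ᵥ h)) with hηdef
    have ha2 : a^2 = (M *ᵥ u) ⬝ᵥ (M *ᵥ u) := Real.sq_sqrt (dotSelf_nonneg _)
    have ha'2 : a'^2 = (M *ᵥ y) ⬝ᵥ (M *ᵥ y) := Real.sq_sqrt (dotSelf_nonneg _)
    have hb2 : b^2 = (B *ᵥ u) ⬝ᵥ (B *ᵥ u) := Real.sq_sqrt (dotSelf_nonneg _)
    have hb'2 : b'^2 = (B *ᵥ y) ⬝ᵥ (B *ᵥ y) := Real.sq_sqrt (dotSelf_nonneg _)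
    have hμ2 : μ^2 = (M *ᵥ h) ⬝ᵥ (M *ᵥ h) := Real.sq_sqrt (dotSelf_nonneg _)
    have hη2 : η^2 = (B *ᵥ h) ⬝ᵥ (B *ᵥ h) := Real.sq_sqrt (dotSelf_nonneg _)
    have hann : 0 ≤ a := Real.sqrt_nonneg _
    have ha'nn : 0 ≤ a' := Real.sqrt_nonneg _
    have hbnn : 0 ≤ b := Real.sqrt_nonneg _
    have hb'nn : 0 ≤ b' := Real.sqrt_nonneg _
    have hμnn : 0 ≤ μ := Real.sqrt_nonneg _
    have hηnn : 0 ≤ η := Real.sqrt_nonneg _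
    have hamin : σmin ≤ a := by
      have h1 : σmin^2 ≤ a^2 := by
        rw [ha2]
        calc σmin^2 = σmin^2 * 1 := by ring
          _ ≤ σmin^2 * (u ⬝ᵥ u) := by nlinarith only [sq_nonneg σmin, hu2]
          _ ≤ _ := hlow u
      nlinarith only [h1, hσ0, hann]
    have hμbd : μ ≤ ε/100 * a := by
      have h1 : (M *ᵥ h) ⬝ᵥ (M *ᵥ h) ≤ (ε/100 * a)^2 := by
        calc (M *ᵥ h) ⬝ᵥ (M *ᵥ h) ≤ σmax^2 * (h ⬝ᵥ h) := hhigh h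
          _ ≤ σmax^2 * ((d:ℝ) * δ^2) := by nlinarith only [sq_nonneg σmax, hhdot]
          _ ≤ (ε/100)^2 * σmin^2 := AF1
          _ ≤ (ε/100 * a)^2 := by
              have hs : σmin^2 ≤ a^2 := by nlinarith only [hamin, hσ0]
              have h2 := mul_le_mul_of_nonneg_left hs (by positivity : (0:ℝ) ≤ (ε/100)^2)
              linarith only [h2]
      calc μ ≤ Real.sqrt ((ε/100 * a)^2) := Real.sqrt_le_sqrt h1
        _ = ε/100 * a := Real.sqrt_sq (by positivity)
    have hηbd : η ≤ ε/70 * a := by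
      have h0 : (B *ᵥ h) ⬝ᵥ (B *ᵥ h) = h ⬝ᵥ (Y *ᵥ h) := (hquadY h).symm
      have h1 : (B *ᵥ h) ⬝ᵥ (B *ᵥ h) ≤ (ε/70 * a)^2 := by
        rw [h0]
        calc h ⬝ᵥ (Y *ᵥ h) ≤ 2 * σmax^2 * ((d:ℝ) * δ)^2 := hYh
          _ ≤ (ε/70)^2 * σmin^2 := AF2
          _ ≤ (ε/70 * a)^2 := by
              have hs : σmin^2 ≤ a^2 := by nlinarith only [hamin, hσ0]
              have h2 := mul_le_mul_of_nonneg_left hs (by positivity : (0:ℝ) ≤ (ε/70)^2)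
              linarith only [h2]
      calc η ≤ Real.sqrt ((ε/70 * a)^2) := Real.sqrt_le_sqrt h1
        _ = ε/70 * a := Real.sqrt_sq (by positivity)
    -- triangle inequalities
    have hMneg : (M *ᵥ (-h)) ⬝ᵥ (M *ᵥ (-h)) = (M *ᵥ h) ⬝ᵥ (M *ᵥ h) := by
      rw [Matrix.mulVec_neg]; simp [neg_dotProduct, dotProduct_neg]
    have hBneg : (B *ᵥ (-h)) ⬝ᵥ (B *ᵥ (-h)) = (B *ᵥ h) ⬝ᵥ (B *ᵥ h) := by
      rw [Matrix.mulVec_neg]; simp [neg_dotProduct, dotProduct_neg]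
    have htri1 : a ≤ a' + μ := by
      rw [ha, ha', hμdef, huyh, Matrix.mulVec_add]
      exact sqrt_dot_add_le _ _
    have htri2 : a' ≤ a + μ := by
      have hyu : y = u + (-h) := by rw [hh]; ring
      rw [ha', ha, hμdef, hyu, Matrix.mulVec_add, ← hMneg]
      exact sqrt_dot_add_le _ _
    have htri3 : b ≤ b' + η := by
      rw [hbdef, hb', hηdef, huyh, Matrix.mulVec_add]
      exact sqrt_dot_add_le _ _
    have htri4 : b' ≤ b + η := by
      have hyu : y = u + (-h) := by rw [hh]; ring
      rw [hb', hbdef, hηdef, hyu, Matrix.mulVec_add, ← hBneg]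
      exact sqrt_dot_add_le _ _
    -- grid bound in terms of a', b'
    rw [hquadY y] at hgrid
    rw [← hb'2, ← ha'2] at hgrid
    have hg1 := (abs_le.mp hgrid).1
    have hg2 := (abs_le.mp hgrid).2
    -- conclusion
    rw [hquadY u, ← hb2, ← ha2, abs_le]
    have hapos : 0 < a := lt_of_lt_of_le hσ0 hamin
    have ha'up : a' ≤ (1 + ε/100) * a := by linarith only [htri2, hμbd]
    have ha'lo : (1 - ε/100) * a ≤ a' := by linarith only [htri1, hμbd]
    have hb'up : b' ≤ 3/2 * a' := by
      nlinarith only [hg2, mul_le_mul_of_nonneg_right hε.le (sq_nonneg a'), hb'nn, ha'nn,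
        sq_nonneg a']
    have hb'up2 : b' ≤ 3/2 * ((1 + ε/100) * a) := by linarith only [hb'up, ha'up, ha'nn]
    have hεa : ε * a ≤ 1/8 * a := mul_le_mul_of_nonneg_right hε.le hapos.le
    have hbup : b ≤ 2 * a := by linarith only [htri3, hb'up2, hηbd, hεa, hapos.le]
    constructor
    · -- lower bound : -(ε a²) ≤ b² - a²
      have e1 : b'^2 ≤ (b + η)^2 := pow_le_pow_left₀ hb'nn htri4 2
      have e2 : ((1 - ε/100) * a)^2 ≤ a'^2 :=
        pow_le_pow_left₀ (mul_nonneg (by linarith only [hε]) hapos.le) ha'lo 2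
      have e3 : (1 - ε/2) * ((1 - ε/100) * a)^2 ≤ (1 - ε/2) * a'^2 :=
        mul_le_mul_of_nonneg_left e2 (by linarith only [hε])
      have e4 : (1 - ε/2) * a'^2 ≤ b'^2 := by linarith only [hg1]
      have e5 : b * η ≤ (2 * a) * (ε/70 * a) := mul_le_mul hbup hηbd hηnn (by positivity)
      have e6 : η^2 ≤ (ε/70 * a)^2 := pow_le_pow_left₀ hηnn hηbd 2
      have hpoly : (1 - ε) ≤ (1 - ε/2) * (1 - ε/100)^2 - 2*(2*(ε/70)) - (ε/70)^2 := by
        nlinarith only [hε0.le, hε, sq_nonneg ε, mul_nonneg hε0.le (sq_nonneg ε)]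
      have hpa := mul_le_mul_of_nonneg_right hpoly (sq_nonneg a)
      linarith only [e1, e3, e4, e5, e6, hpa]
    · -- upper bound : b² - a² ≤ ε a²
      have e1 : b^2 ≤ (b' + η)^2 := pow_le_pow_left₀ hbnn htri3 2
      have e2 : a'^2 ≤ ((1 + ε/100) * a)^2 := pow_le_pow_left₀ ha'nn ha'up 2
      have e3 : (1 + ε/2) * a'^2 ≤ (1 + ε/2) * ((1 + ε/100) * a)^2 :=
        mul_le_mul_of_nonneg_left e2 (by linarith only [hε0.le])
      have e4 : b'^2 ≤ (1 + ε/2) * a'^2 := by linarith only [hg2]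
      have e5 : b' * η ≤ (3/2 * ((1 + ε/100) * a)) * (ε/70 * a) :=
        mul_le_mul hb'up2 hηbd hηnn (by positivity)
      have e6 : η^2 ≤ (ε/70 * a)^2 := pow_le_pow_left₀ hηnn hηbd 2
      have hpoly : (1 + ε/2) * (1 + ε/100)^2 + 2*(3/2 * (1 + ε/100) * (ε/70)) + (ε/70)^2
          ≤ 1 + ε := by
        nlinarith only [hε0.le, hε, sq_nonneg ε, mul_nonneg hε0.le (sq_nonneg ε)]
      have hpa := mul_le_mul_of_nonneg_right hpoly (sq_nonneg a)
      linarith only [e1, e3, e4, e5, e6, hpa]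
  -- extend to all of ℝ^d by homogeneity
  have key : ∀ x : Fin d → ℝ,
      |x ⬝ᵥ (Y *ᵥ x) - (M *ᵥ x) ⬝ᵥ (M *ᵥ x)| ≤ ε * ((M *ᵥ x) ⬝ᵥ (M *ᵥ x)) := by
    intro x
    rcases eq_or_ne x 0 with rfl | hx0
    · simp [Matrix.mulVec_zero]
    obtain ⟨j, hj⟩ := Function.ne_iff.mp hx0
    have hd0 : 0 < d := j.pos
    obtain ⟨i0, -, hi0⟩ :=
      Finset.exists_max_image Finset.univ (fun i => |x i|) ⟨j, Finset.mem_univ j⟩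
    have hc : 0 < |x i0| := lt_of_lt_of_le (abs_pos.2 hj) (hi0 j (Finset.mem_univ j))
    set c := |x i0| with hcdef
    set u : Fin d → ℝ := c⁻¹ • x with hu
    have hxc : x = c • u := by rw [hu, smul_inv_smul₀ hc.ne']
    have h1 : ∀ i, |u i| ≤ 1 := by
      intro i
      rw [hu]
      simp only [Pi.smul_apply, smul_eq_mul, abs_mul, abs_inv, abs_of_pos hc]
      rw [inv_mul_le_iff₀ hc]
      simpa using hi0 i (Finset.mem_univ i)
    have h2 : 1 ≤ u ⬝ᵥ u := by
      have hui0 : u i0 * u i0 = 1 := by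
        rw [hu]
        simp only [Pi.smul_apply, smul_eq_mul]
        rw [show c⁻¹ * x i0 * (c⁻¹ * x i0) = (x i0 * x i0) * (c⁻¹ * c⁻¹) by ring]
        rw [show x i0 * x i0 = c * c by rw [hcdef, ← abs_mul_abs_self]]
        field_simp
      calc (1:ℝ) = u i0 * u i0 := hui0.symm
        _ ≤ ∑ i, u i * u i :=
            Finset.single_le_sum (fun i _ => mul_self_nonneg (u i)) (Finset.mem_univ i0)
        _ = u ⬝ᵥ u := rfl
    have hcore := core u hd0 h1 h2
    rw [hxc, quad_smul, mdot_smul, ← mul_sub, abs_mul, abs_of_nonneg (sq_nonneg c)]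
    calc c^2 * |u ⬝ᵥ (Y *ᵥ u) - (M *ᵥ u) ⬝ᵥ (M *ᵥ u)|
        ≤ c^2 * (ε * ((M *ᵥ u) ⬝ᵥ (M *ᵥ u))) :=
          mul_le_mul_of_nonneg_left hcore (sq_nonneg c)
      _ = ε * (c^2 * ((M *ᵥ u) ⬝ᵥ (M *ᵥ u))) := by ring
  -- assemble the final statement
  have hMH : (Mᵀ * M).IsHermitian := by
    have := Matrix.isHermitian_conjTranspose_mul_self M
    rwa [Matrix.conjTranspose_eq_transpose_of_trivial] at this
  refine ⟨key, PosSemidef.of_dotProduct_mulVec_nonneg ?_ ?_, PosSemidef.of_dotProduct_mulVec_nonneg ?_ ?_⟩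
  · exact hY.1.sub (by
      rw [Matrix.IsHermitian, Matrix.conjTranspose_smul]
      rw [hMH]
      simp)
  · intro x
    have hk := (abs_le.mp (key x)).1
    simp only [star_trivial, Matrix.sub_mulVec, dotProduct_sub,
      Matrix.smul_mulVec, dotProduct_smul, smul_eq_mul,
      quad_transpose_mul]
    nlinarith [dotSelf_nonneg (M *ᵥ x)]
  · exact (by
      rw [Matrix.IsHermitian, Matrix.conjTranspose_smul]
      rw [hMH]
      simp : ((1 + ε) • (Mᵀ * M)).IsHermitian).sub hY.1
  · intro x
    have hk := (abs_le.mp (key x)).2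
    simp only [star_trivial, Matrix.sub_mulVec, dotProduct_sub,
      Matrix.smul_mulVec, dotProduct_smul, smul_eq_mul,
      quad_transpose_mul]
    nlinarith [dotSelf_nonneg (M *ᵥ x)]
end

section
/- Let d₁ ∈ [d], let U ∈ ℝ^{d×d₁} and U⊥ ∈ ℝ^{d×(d−d₁)} have orthonormal columns with [U, U⊥] orthogonal, and for v ∈ ℝ^d write v_U = UUᵀv and v_{U⊥} = U⊥U⊥ᵀv. Let λ > 0, x* = (1/√d)·Σ_{j=1}^{d−d₁} U⊥_{·,j}, and let z ∈ ℝ^d satisfy ‖z‖₂ ≤ 1 and z_U ≠ 0. Set Δ = (10 − ⟨z_{U⊥}, x*⟩)/‖z_U‖₂ and define the candidate solution x*_t = x* + ((10 − ⟨z_{U⊥}, x*⟩)/‖z_U‖₂²)·z_U. Then: (i) U⊥ᵀ x*_t = (1/√d)·1_{d−d₁}; (ii) ⟨z, x*_t⟩ = 10; and hence (iii) L(x*_t) = λ‖x*_t‖₂² ≤ λ·(Δ² + 1), where L(x) = ‖U⊥ᵀ x − (1/√d)·1_{d−d₁}‖₂² + (1/100)·(⟨z, x⟩ − 10)² + λ‖x‖₂².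 -/
open Matrix

private lemma dot_mulVec_mulVec {m n p : Type*} [Fintype m] [Fintype n] [Fintype p]
    (A : Matrix m n ℝ) (B : Matrix m p ℝ) (x : n → ℝ) (y : p → ℝ) :
    (A *ᵥ x) ⬝ᵥ (B *ᵥ y) = x ⬝ᵥ ((Aᵀ * B) *ᵥ y) := by
  rw [← mulVec_mulVec, dotProduct_mulVec x, vecMul_transpose]

/-- candidate-solution computation, Eq. (11) in Section 4.3. With
`x* = (1/√d)·Σ_j U⊥_{·,j}` and `z` with `‖z‖₂ ≤ 1`, `z_U ≠ 0`, the candidate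
`x*_t = x* + ((10 − ⟨z_{U⊥}, x*⟩)/‖z_U‖₂²)·z_U` satisfies: (i) `U⊥ᵀ x*_t = (1/√d)·1`;
(ii) `⟨z, x*_t⟩ = 10`; hence (iii) `L(x*_t) = λ‖x*_t‖₂² ≤ λ(Δ² + 1)` where
`Δ = (10 − ⟨z_{U⊥}, x*⟩)/‖z_U‖₂`. -/
theorem candidate_solution_loss_bound
    (d dOne : ℕ) (hd1 : 1 ≤ dOne) (hd2 : dOne ≤ d)
    (U : Matrix (Fin d) (Fin dOne) ℝ) (Up : Matrix (Fin d) (Fin (d - dOne)) ℝ)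
    (hU : Uᵀ * U = 1) (hUp : Upᵀ * Up = 1) (hUUp : Uᵀ * Up = 0)
    (hcomplete : U * Uᵀ + Up * Upᵀ = 1)
    (lam : ℝ) (hlam : 0 < lam)
    (z : Fin d → ℝ) (hz : Real.sqrt (z ⬝ᵥ z) ≤ 1)
    (zU zUp : Fin d → ℝ) (hzU : zU = U *ᵥ (Uᵀ *ᵥ z)) (hzUp : zUp = Up *ᵥ (Upᵀ *ᵥ z))
    (hzU0 : zU ≠ 0)
    (xstar : Fin d → ℝ) (hxstar : xstar = Up *ᵥ (fun _ => 1 / Real.sqrt (d : ℝ)))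
    (Δ : ℝ) (hΔ : Δ = (10 - zUp ⬝ᵥ xstar) / Real.sqrt (zU ⬝ᵥ zU))
    (xt : Fin d → ℝ) (hxt : xt = xstar + ((10 - zUp ⬝ᵥ xstar) / (zU ⬝ᵥ zU)) • zU)
    (L : (Fin d → ℝ) → ℝ)
    (hL : ∀ x, L x = (Upᵀ *ᵥ x - (fun _ => 1 / Real.sqrt (d : ℝ)))
        ⬝ᵥ (Upᵀ *ᵥ x - (fun _ => 1 / Real.sqrt (d : ℝ)))
      + (1 / 100) * (z ⬝ᵥ x - 10) ^ 2 + lam * (x ⬝ᵥ x)) :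
    (Upᵀ *ᵥ xt = fun _ => 1 / Real.sqrt (d : ℝ)) ∧
    z ⬝ᵥ xt = 10 ∧
    L xt = lam * (xt ⬝ᵥ xt) ∧
    lam * (xt ⬝ᵥ xt) ≤ lam * (Δ ^ 2 + 1) := by
  have hdpos : (0:ℝ) < (d:ℝ) := by
    exact_mod_cast Nat.lt_of_lt_of_le Nat.zero_lt_one (hd1.trans hd2)
  have hUpU : Upᵀ * U = 0 := by
    have := congrArg Matrix.transpose hUUp
    simpa using this
  -- s := ‖z_U‖²
  set a : ℝ := zUp ⬝ᵥ xstar with ha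
  set s : ℝ := zU ⬝ᵥ zU with hs
  have hs0 : 0 < s := by
    rcases (dotProduct_self_eq_zero (v := zU)).not.mpr hzU0 with h
    have hnn : 0 ≤ s := by
      apply Finset.sum_nonneg; intro i _; exact mul_self_nonneg _
    exact lt_of_le_of_ne hnn (Ne.symm h)
  -- part (i)
  have hUpxstar : Upᵀ *ᵥ xstar = fun _ => 1 / Real.sqrt (d : ℝ) := by
    rw [hxstar, mulVec_mulVec, hUp, one_mulVec]
  have hUpzU : Upᵀ *ᵥ zU = 0 := by
    rw [hzU, mulVec_mulVec, mulVec_mulVec, hUpU, Matrix.zero_mul, zero_mulVec]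
  have part1 : Upᵀ *ᵥ xt = fun _ => 1 / Real.sqrt (d : ℝ) := by
    rw [hxt, mulVec_add, mulVec_smul, hUpxstar, hUpzU, smul_zero, add_zero]
  -- dot product facts
  have hzzU : z ⬝ᵥ zU = s := by
    rw [hs, hzU, dot_mulVec_mulVec, hU, one_mulVec, dotProduct_mulVec z,
      ← mulVec_transpose]
  have hzxstar : z ⬝ᵥ xstar = a := by
    rw [ha, hzUp, hxstar, dot_mulVec_mulVec, hUp, one_mulVec, dotProduct_mulVec z,
      ← mulVec_transpose]
  have hzUxstar : zU ⬝ᵥ xstar = 0 := by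
    rw [hzU, hxstar, dot_mulVec_mulVec, hUUp, zero_mulVec, dotProduct_zero]
  -- part (ii)
  have part2 : z ⬝ᵥ xt = 10 := by
    rw [hxt, dotProduct_add, dotProduct_smul, hzzU, hzxstar, smul_eq_mul]
    field_simp
    ring
  -- ‖x*‖²
  have hxsxs : xstar ⬝ᵥ xstar = ((d - dOne : ℕ) : ℝ) / d := by
    rw [hxstar, dot_mulVec_mulVec, hUp, one_mulVec]
    simp only [dotProduct, Finset.sum_const, Finset.card_univ, Fintype.card_fin,
      nsmul_eq_mul]
    rw [div_mul_div_comm, one_mul, Real.mul_self_sqrt hdpos.le, mul_one_div]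
  have hxsxs_le : xstar ⬝ᵥ xstar ≤ 1 := by
    rw [hxsxs, div_le_one hdpos]
    exact_mod_cast Nat.sub_le d dOne
  -- ‖x_t‖²
  have hxtxt : xt ⬝ᵥ xt = Δ ^ 2 + xstar ⬝ᵥ xstar := by
    have hxszU : xstar ⬝ᵥ zU = 0 := by rw [dotProduct_comm]; exact hzUxstar
    rw [hxt, dotProduct_add, add_dotProduct, add_dotProduct, dotProduct_smul,
      smul_dotProduct, smul_dotProduct, dotProduct_smul, hxszU,
      dotProduct_comm zU xstar, hxszU]
    rw [hΔ, div_pow, Real.sq_sqrt hs0.le]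
    simp only [smul_zero, add_zero, zero_add, smul_eq_mul]
    field_simp
    ring
  -- part (iii)
  have part3 : L xt = lam * (xt ⬝ᵥ xt) := by
    rw [hL, part1, part2, sub_self, sub_self, zero_dotProduct, zero_pow two_ne_zero,
      mul_zero, zero_add, zero_add]
  refine ⟨part1, part2, part3, ?_⟩
  apply mul_le_mul_of_nonneg_left _ hlam.le
  rw [hxtxt]
  linarith
end
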